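/- arXiv:2407.12372 — 9 statements merged into one kernel-verified Lean document; each statement's English description precedes it below -/
import Mathlib

section
/- Let f : ℝⁿ → ℝ ∪ {+∞} be a proper lower semicontinuous function whose domain dom(f) := {x ∈ ℝⁿ : f(x) ∈ ℝ} is closed. Then there exist C^∞ (infinitely differentiable) functions P, Q : ℝⁿ × ℝ³ → ℝ such that the optimistic value function φ_o of the bilevel problem with upper level P, lower level Q, and unconstrained lower-level feasible set 𝒴 = ℝ³ satisfies φ_o = f (where f is viewed as taking values in ℝ ∪ {±∞} and never takes the value −∞). -/
open Set

noncomputable section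

/-- The lower-level argmin set `Θ(x) = {y ∈ 𝒴 : ∀ y' ∈ 𝒴, Q(x,y) ≤ Q(x,y')}`. -/
def argminSet {n m : ℕ} (Q : (Fin n → ℝ) → (Fin m → ℝ) → ℝ) (Y : Set (Fin m → ℝ))
    (x : Fin n → ℝ) : Set (Fin m → ℝ) :=
  {y | y ∈ Y ∧ ∀ y' ∈ Y, Q x y ≤ Q x y'}

/-- Optimistic value function `φ_o(x) = inf_{y ∈ Θ(x)} P(x,y)`,
with the convention `inf ∅ = +∞`. -/
def valOpt {n m : ℕ} (P Q : (Fin n → ℝ) → (Fin m → ℝ) → ℝ) (Y : Set (Fin m → ℝ))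
    (x : Fin n → ℝ) : EReal :=
  ⨅ y ∈ argminSet Q Y x, ((P x y : ℝ) : EReal)

/-- Pessimistic value function `φ_p(x) = sup_{y ∈ Θ(x)} P(x,y)`,
with the convention `sup ∅ = -∞`. -/
def valPess {n m : ℕ} (P Q : (Fin n → ℝ) → (Fin m → ℝ) → ℝ) (Y : Set (Fin m → ℝ))
    (x : Fin n → ℝ) : EReal :=
  ⨆ y ∈ argminSet Q Y x, ((P x y : ℝ) : EReal)

/-- `P (x, y)` is a real polynomial in the joint variables `(x, y)`. -/
def IsPolyMap {n m : ℕ} (P : (Fin n → ℝ) → (Fin m → ℝ) → ℝ) : Prop :=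
  ∃ p : MvPolynomial (Fin n ⊕ Fin m) ℝ,
    ∀ x y, P x y = MvPolynomial.eval (Sum.elim x y) p

/-- Basic semi-algebraic subset of `ℝ^ι`. -/
def IsBasicSemialgebraic {ι : Type} [Fintype ι] (S : Set (ι → ℝ)) : Prop :=
  ∃ (p : MvPolynomial ι ℝ) (k : ℕ) (q : Fin k → MvPolynomial ι ℝ),
    S = {x | MvPolynomial.eval x p = 0 ∧ ∀ j, 0 < MvPolynomial.eval x (q j)}

/-- Semi-algebraic set: a finite union of basic semi-algebraic sets. -/
def IsSemialgebraic {ι : Type} [Fintype ι] (S : Set (ι → ℝ)) : Prop :=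
  ∃ (N : ℕ) (T : Fin N → Set (ι → ℝ)),
    (∀ i, IsBasicSemialgebraic (T i)) ∧ S = ⋃ i, T i

/-- Semi-algebraic real-valued function: its graph (inside `ℝ^{ι} × ℝ ≅ ℝ^{ι ⊕ Unit}`)
is semi-algebraic. -/
def IsSemialgebraicFun {ι : Type} [Fintype ι] (f : (ι → ℝ) → ℝ) : Prop :=
  IsSemialgebraic {z : (ι ⊕ Unit) → ℝ | f (z ∘ Sum.inl) = z (Sum.inr ())}

/-- Extended-real-valued semi-algebraic function: the sets where it is finite, `+∞`, `-∞`
are semi-algebraic, and the graph of its restriction to its (finite) domain is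
semi-algebraic. -/
def IsERealSemialgebraicFun {ι : Type} [Fintype ι] (h : (ι → ℝ) → EReal) : Prop :=
  IsSemialgebraic {x | ∃ r : ℝ, h x = (r : EReal)} ∧
  IsSemialgebraic {x | h x = ⊤} ∧
  IsSemialgebraic {x | h x = ⊥} ∧
  IsSemialgebraic {z : (ι ⊕ Unit) → ℝ | h (z ∘ Sum.inl) = ((z (Sum.inr ()) : ℝ) : EReal)}

/-- A (possibly unbounded) box `[a₁,b₁] × ⋯ × [aₘ,bₘ]` in `ℝ^m`, with
endpoints in `ℝ ∪ {±∞}`. -/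
def IsBox {m : ℕ} (Y : Set (Fin m → ℝ)) : Prop :=
  ∃ a b : Fin m → EReal,
    Y = {y | ∀ i, a i ≤ (y i : EReal) ∧ (y i : EReal) ≤ b i}

/-- The bounded box `[a₁,b₁] × ⋯ × [aₘ,bₘ]` with real endpoints. -/
def boundedBox {m : ℕ} (a b : Fin m → ℝ) : Set (Fin m → ℝ) :=
  {y | ∀ i, y i ∈ Set.Icc (a i) (b i)}

/-- Piecewise polynomial function: there is a finite partition of `ℝ^n` into pairwise
disjoint semi-algebraic sets on each of which `f` coincides with a polynomial. -/
def IsPiecewisePolynomial {n : ℕ} (f : (Fin n → ℝ) → ℝ) : Prop :=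
  ∃ (N : ℕ) (S : Fin N → Set (Fin n → ℝ)) (p : Fin N → MvPolynomial (Fin n) ℝ),
    (∀ i, IsSemialgebraic (S i)) ∧
    (∀ i j, i ≠ j → Disjoint (S i) (S j)) ∧
    (⋃ i, S i) = Set.univ ∧
    (∀ i, ∀ x ∈ S i, f x = MvPolynomial.eval x (p i))

/-- Any proper lower semicontinuous `f : ℝⁿ → ℝ ∪ {+∞}` with closed domain is
the optimistic value function of a `C^∞` bilevel problem with 3 unconstrained lower-level
variables. -/
theorem smooth_bilevel_represents_lsc (n : ℕ) (f : (Fin n → ℝ) → EReal)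
    (hne_bot : ∀ x, f x ≠ ⊥)
    (hproper : ∃ x, f x ≠ ⊤)
    (hlsc : LowerSemicontinuous f)
    (hdom : IsClosed {x | ∃ r : ℝ, f x = (r : EReal)}) :
    ∃ P Q : (Fin n → ℝ) → (Fin 3 → ℝ) → ℝ,
      ContDiff ℝ (⊤ : ℕ∞) (Function.uncurry P) ∧
      ContDiff ℝ (⊤ : ℕ∞) (Function.uncurry Q) ∧
      ∀ x, valOpt P Q Set.univ x = f x := by
    classical
  -- epigraph of f inside ℝⁿ × ℝ, closed by lower semicontinuity
  set E : Set ((Fin n → ℝ) × ℝ) := {p | f p.1 ≤ ((p.2 : ℝ) : EReal)} with hE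
  have hEclosed : IsClosed E := by
    have h1 : IsClosed {p : (Fin n → ℝ) × EReal | f p.1 ≤ p.2} := hlsc.isClosed_epigraph
    have h2 : E = (fun p : (Fin n → ℝ) × ℝ => (p.1, (p.2 : EReal))) ⁻¹'
        {p : (Fin n → ℝ) × EReal | f p.1 ≤ p.2} := rfl
    rw [h2]
    exact h1.preimage (continuous_fst.prodMk (continuous_coe_real_ereal.comp continuous_snd))
  -- a smooth nonnegative function whose zero set is exactly E
  obtain ⟨g, hgsupp, hgsmooth, hgrange⟩ := hEclosed.isOpen_compl.exists_contDiff_support_eq (n := ⊤)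
  have hg0 : ∀ p, 0 ≤ g p := fun p => (hgrange ⟨p, rfl⟩).1
  have hgzero : ∀ p, g p = 0 ↔ p ∈ E := by
    intro p
    rw [← Function.notMem_support, hgsupp, Set.notMem_compl_iff]
  refine ⟨fun _ y => y 0, fun x y => g (x, y 0) * Real.exp (y 1), ?_, ?_, ?_⟩
  · exact (ContinuousLinearMap.proj (R := ℝ) (φ := fun _ : Fin 3 => ℝ) 0).contDiff.comp
      contDiff_snd
  · have h1 : ContDiff ℝ (⊤ : ℕ∞)
        (fun p : (Fin n → ℝ) × (Fin 3 → ℝ) => g (p.1, p.2 0)) := by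
      apply hgsmooth.comp
      exact contDiff_fst.prodMk
        ((ContinuousLinearMap.proj (R := ℝ) (φ := fun _ : Fin 3 => ℝ) 0).contDiff.comp
          contDiff_snd)
    have h2 : ContDiff ℝ (⊤ : ℕ∞)
        (fun p : (Fin n → ℝ) × (Fin 3 → ℝ) => Real.exp (p.2 1)) :=
      Real.contDiff_exp.comp
        ((ContinuousLinearMap.proj (R := ℝ) (φ := fun _ : Fin 3 => ℝ) 1).contDiff.comp
          contDiff_snd)
    exact h1.mul h2
  · intro x
    by_cases htop : f x = ⊤
    · -- the lower level has no minimizer, so the argmin set is empty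
      have hempty : argminSet (fun (x : Fin n → ℝ) (y : Fin 3 → ℝ) => g (x, y 0) * Real.exp (y 1)) Set.univ x = ∅ := by
        rw [Set.eq_empty_iff_forall_notMem]
        rintro y ⟨-, hy⟩
        have gpos : 0 < g (x, y 0) := by
          rcases lt_or_eq_of_le (hg0 (x, y 0)) with h | h
          · exact h
          · exfalso
            have : (x, y 0) ∈ E := (hgzero _).mp h.symm
            rw [hE, Set.mem_setOf_eq, htop] at this
            exact (EReal.coe_lt_top (y 0)).not_ge this
        have := hy (Function.update y 1 (y 1 - 1)) (Set.mem_univ _)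
        simp only [Function.update_self,
          Function.update_of_ne (show (0 : Fin 3) ≠ 1 by decide)] at this
        have hexp : Real.exp (y 1) ≤ Real.exp (y 1 - 1) :=
          le_of_mul_le_mul_left this gpos
        rw [Real.exp_le_exp] at hexp
        linarith
      rw [valOpt, hempty, htop]
      simp
    · -- f x is a real number r
      obtain ⟨r, hr⟩ : ∃ r : ℝ, f x = (r : EReal) :=
        ⟨(f x).toReal, (EReal.coe_toReal htop (hne_bot x)).symm⟩
      have hargmin : argminSet (fun (x : Fin n → ℝ) (y : Fin 3 → ℝ) => g (x, y 0) * Real.exp (y 1)) Set.univ x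
          = {y | r ≤ y 0} := by
        ext y
        simp only [argminSet, Set.mem_setOf_eq, Set.mem_univ, true_and]
        constructor
        · intro h
          have h0 := h ![r, 0, 0] trivial
          have hgr : g (x, r) = 0 := by
            rw [hgzero]
            rw [hE, Set.mem_setOf_eq, hr]
          simp only [Matrix.cons_val_zero, Matrix.cons_val_one, Matrix.head_cons, hgr,
            zero_mul] at h0
          have hge : 0 ≤ g (x, y 0) * Real.exp (y 1) :=
            mul_nonneg (hg0 _) (Real.exp_pos _).le
          have heq : g (x, y 0) * Real.exp (y 1) = 0 := le_antisymm h0 hge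
          rcases mul_eq_zero.mp heq with h' | h'
          · have : (x, y 0) ∈ E := (hgzero _).mp h'
            rw [hE, Set.mem_setOf_eq, hr] at this
            exact EReal.coe_le_coe_iff.mp this
          · exact absurd h' (Real.exp_pos _).ne'
        · intro hry y' _
          have : (x, y 0) ∈ E := by
            rw [hE, Set.mem_setOf_eq, hr]
            exact EReal.coe_le_coe_iff.mpr hry
          rw [← hgzero] at this
          rw [this, zero_mul]
          exact mul_nonneg (hg0 _) (Real.exp_pos _).le
      rw [valOpt, hargmin, hr]
      apply le_antisymm
      · have := iInf₂_le (f := fun (y : Fin 3 → ℝ) (_ : y ∈ {y : Fin 3 → ℝ | r ≤ y 0}) =>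
          ((y 0 : ℝ) : EReal)) ![r, 0, 0] (by simp)
        simpa using this
      · exact le_iInf₂ fun y hy => EReal.coe_le_coe_iff.mpr hy
end
end

section
/- Let f : ℝⁿ → ℝ ∪ {−∞} be a proper upper semicontinuous function whose domain dom(f) := {x ∈ ℝⁿ : f(x) ∈ ℝ} is closed. Then there exist C^∞ (infinitely differentiable) functions P, Q : ℝⁿ × ℝ³ → ℝ such that the pessimistic value function φ_p of the bilevel problem with upper level P, lower level Q, and unconstrained lower-level feasible set 𝒴 = ℝ³ satisfies φ_p = f (where f is viewed as taking values in ℝ ∪ {±∞} and never takes the value +∞). -/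
open Set Manifold

noncomputable section

/-- Any proper upper semicontinuous `f : ℝⁿ → ℝ ∪ {-∞}` with closed domain is
the pessimistic value function of a `C^∞` bilevel problem with 3 unconstrained lower-level
variables. -/
theorem smooth_bilevel_represents_usc (n : ℕ) (f : (Fin n → ℝ) → EReal)
    (hne_top : ∀ x, f x ≠ ⊤)
    (hproper : ∃ x, f x ≠ ⊥)
    (husc : UpperSemicontinuous f)
    (hdom : IsClosed {x | ∃ r : ℝ, f x = (r : EReal)}) :
    ∃ P Q : (Fin n → ℝ) → (Fin 3 → ℝ) → ℝ,
      ContDiff ℝ (⊤ : ℕ∞) (Function.uncurry P) ∧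
      ContDiff ℝ (⊤ : ℕ∞) (Function.uncurry Q) ∧
      ∀ x, valPess P Q Set.univ x = f x := by
  classical
  -- the hypograph of `f` is closed since `f` is usc and never `+∞`
  set S : Set ((Fin n → ℝ) × ℝ) := {p | (p.2 : EReal) ≤ f p.1} with hS
  have hSclosed : IsClosed S := by
    rw [← isOpen_compl_iff, isOpen_iff_mem_nhds]
    rintro ⟨x, t⟩ hp
    simp only [mem_compl_iff, hS, mem_setOf_eq, not_le] at hp
    obtain ⟨r, hr1, hr2⟩ := exists_between hp
    lift r to ℝ using ⟨ne_top_of_lt hr2, ne_bot_of_gt hr1⟩ with r'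
    have h1 : ∀ᶠ x' in nhds x, f x' < (r' : EReal) := husc x _ hr1
    have h2 : ∀ᶠ t' in nhds t, r' < t' := eventually_gt_nhds (by exact_mod_cast hr2)
    rw [nhds_prod_eq]
    refine Filter.mem_of_superset (Filter.prod_mem_prod h1 h2) ?_
    rintro ⟨x', t'⟩ ⟨hx', ht'⟩
    simp only [mem_setOf_eq] at hx' ht'
    simp only [mem_compl_iff, hS, mem_setOf_eq, not_le]
    exact lt_trans hx' (EReal.coe_lt_coe_iff.mpr ht')
  -- smooth function vanishing exactly on the hypograph
  obtain ⟨h, hsmooth, -, hzero, -⟩ :=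
    exists_contMDiff_zero_iff_one_iff_of_isClosed (n := ⊤) (𝓘(ℝ, (Fin n → ℝ) × ℝ)) hSclosed
      isClosed_empty (Set.disjoint_empty _)
  have hdiff : ContDiff ℝ (⊤ : ℕ∞) h := hsmooth.contDiff
  set P : (Fin n → ℝ) → (Fin 3 → ℝ) → ℝ := fun _ y => y 0 with hPdef
  set Q : (Fin n → ℝ) → (Fin 3 → ℝ) → ℝ :=
    fun x y => (h (x, y 0) * Real.exp (y 1)) ^ 2 with hQdef
  have hproj : ∀ i : Fin 3, ContDiff ℝ (⊤ : ℕ∞) (fun y : Fin 3 → ℝ => y i) :=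
    fun i => contDiff_pi.mp contDiff_id i
  refine ⟨P, Q, ?_, ?_, ?_⟩
  · exact (hproj 0).comp contDiff_snd
  · apply ContDiff.pow
    apply ContDiff.mul
    · exact hdiff.comp (contDiff_fst.prodMk ((hproj 0).comp contDiff_snd))
    · exact Real.contDiff_exp.comp ((hproj 1).comp contDiff_snd)
  · intro x
    -- the argmin set is exactly where `h (x, y 0) = 0`
    have hmem : ∀ y : Fin 3 → ℝ,
        y ∈ argminSet Q Set.univ x ↔ h (x, y 0) = 0 := by
      intro y
      constructor
      · rintro ⟨-, hmin⟩
        by_contra hne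
        have hne' : h (x, y 0) * Real.exp (y 1) ≠ 0 :=
          mul_ne_zero hne (Real.exp_ne_zero _)
        have hpos : 0 < Q x y :=
          lt_of_le_of_ne (sq_nonneg _) (Ne.symm (pow_ne_zero 2 hne'))
        have hle := hmin (Function.update y 1 (y 1 - 1)) (mem_univ _)
        have e0 : Function.update y 1 (y 1 - 1) 0 = y 0 :=
          Function.update_of_ne (by decide) _ _
        have e1 : Function.update y 1 (y 1 - 1) 1 = y 1 - 1 :=
          Function.update_self _ _ _
        rw [hQdef] at hle
        simp only [e0, e1] at hle
        have key : Q x y ≤ Q x y * (Real.exp (-1)) ^ 2 := by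
          calc Q x y ≤ (h (x, y 0) * Real.exp (y 1 - 1)) ^ 2 := hle
            _ = Q x y * (Real.exp (-1)) ^ 2 := by
                rw [hQdef, show y 1 - 1 = y 1 + (-1) by ring, Real.exp_add]; ring
        have he : Real.exp (-1) ^ 2 < 1 := by
          nlinarith [Real.exp_pos (-1),
            Real.exp_lt_one_iff.mpr (show (-1:ℝ) < 0 by norm_num)]
        nlinarith [mul_lt_mul_of_pos_left he hpos]
      · intro h0
        refine ⟨mem_univ _, fun y' _ => ?_⟩
        have h1 : Q x y = 0 := by rw [hQdef]; simp [h0]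
        have h2 : 0 ≤ Q x y' := by rw [hQdef]; positivity
        linarith
    show (⨆ y ∈ argminSet Q Set.univ x, ((P x y : ℝ) : EReal)) = f x
    rcases eq_or_ne (f x) ⊥ with hfx | hbot
    ·
      rw [hfx]
      refine le_bot_iff.mp (iSup₂_le fun y hy => absurd ((hmem y).mp hy) ?_)
      intro h0
      have : (x, y 0) ∈ S := (hzero (x, y 0)).mpr h0
      rw [hS, mem_setOf_eq, hfx] at this
      exact (EReal.coe_ne_bot _) (le_bot_iff.mp this)
    · obtain ⟨r, hfx⟩ : ∃ r : ℝ, f x = (r : EReal) :=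
        ⟨(f x).toReal, (EReal.coe_toReal (hne_top x) hbot).symm⟩
      rw [hfx]
      apply le_antisymm
      · refine iSup₂_le fun y hy => ?_
        have : (x, y 0) ∈ S := (hzero (x, y 0)).mpr ((hmem y).mp hy)
        rw [hS, mem_setOf_eq, hfx] at this
        exact this
      · refine le_iSup₂_of_le (fun _ => r) ?_ le_rfl
        refine (hmem _).mpr ((hzero (x, r)).mp ?_)
        rw [hS, mem_setOf_eq, hfx]
end
end

section
/- Let P, Q : ℝⁿ × ℝᵐ → ℝ be continuous functions and let 𝒴 ⊆ ℝᵐ be a nonempty compact set. Then the optimistic value function φ_o : ℝⁿ → ℝ, φ_o(x) = min_{y ∈ Θ(x)} P(x,y), is real-valued and lower semicontinuous on ℝⁿ. -/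
open Set

noncomputable section

lemma valOpt_attained {n m : ℕ} (P Q : (Fin n → ℝ) → (Fin m → ℝ) → ℝ)
    (hP : Continuous (Function.uncurry P)) (hQ : Continuous (Function.uncurry Q))
    (Y : Set (Fin m → ℝ)) (hYne : Y.Nonempty) (hYc : IsCompact Y) (x : Fin n → ℝ) :
    ∃ y ∈ argminSet Q Y x, valOpt P Q Y x = ((P x y : ℝ) : EReal) := by
  have hQx : Continuous (Q x) := hQ.comp (Continuous.prodMk_right x)
  have hPx : Continuous (P x) := hP.comp (Continuous.prodMk_right x)
  -- argmin set nonempty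
  obtain ⟨y₀, hy₀Y, hy₀min⟩ := hYc.exists_isMinOn hYne hQx.continuousOn
  have hSne : (argminSet Q Y x).Nonempty := ⟨y₀, hy₀Y, fun y' hy' => hy₀min hy'⟩
  -- argmin set compact
  have hSeq : argminSet Q Y x = Y ∩ ⋂ y' ∈ Y, {y | Q x y ≤ Q x y'} := by
    ext y; simp [argminSet, Set.mem_iInter]
  have hSc : IsCompact (argminSet Q Y x) := by
    rw [hSeq]
    exact hYc.inter_right (isClosed_biInter fun y' _ =>
      isClosed_le hQx continuous_const)
  obtain ⟨y₁, hy₁S, hy₁min⟩ := hSc.exists_isMinOn hSne hPx.continuousOn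
  refine ⟨y₁, hy₁S, le_antisymm (iInf₂_le y₁ hy₁S) ?_⟩
  exact le_iInf₂ fun y hy => EReal.coe_le_coe_iff.mpr (hy₁min hy)

/-- for continuous `P, Q` and nonempty compact `𝒴`, the optimistic value
function is real-valued and lower semicontinuous. -/
theorem valOpt_real_valued_lsc (n m : ℕ)
    (P Q : (Fin n → ℝ) → (Fin m → ℝ) → ℝ)
    (hP : Continuous (Function.uncurry P)) (hQ : Continuous (Function.uncurry Q))
    (Y : Set (Fin m → ℝ)) (hYne : Y.Nonempty) (hYc : IsCompact Y) :
    (∀ x, ∃ r : ℝ, valOpt P Q Y x = (r : EReal)) ∧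
    LowerSemicontinuous (valOpt P Q Y) := by
  have hreal : ∀ x, ∃ r : ℝ, valOpt P Q Y x = (r : EReal) := by
    intro x
    obtain ⟨y, _, hy⟩ := valOpt_attained P Q hP hQ Y hYne hYc x
    exact ⟨P x y, hy⟩
  refine ⟨hreal, ?_⟩
  intro x c hc
  -- reduce to real c
  induction c using EReal.rec with
  | bot =>
    refine Filter.Eventually.of_forall fun x' => ?_
    obtain ⟨r, hr⟩ := hreal x'
    rw [hr]; exact bot_lt_iff_ne_bot.mpr (EReal.coe_ne_bot r)
  | top =>
    exact absurd hc (by simp)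
  | coe c =>
    by_contra hcon
    rw [Filter.not_eventually] at hcon
    simp only [not_lt] at hcon
    obtain ⟨u, hu, hule⟩ := Filter.frequently_iff_seq_forall.mp hcon
    -- choose minimizers
    choose y hyS hval using fun k => valOpt_attained P Q hP hQ Y hYne hYc (u k)
    have hyY : ∀ k, y k ∈ Y := fun k => (hyS k).1
    obtain ⟨ylim, hylimY, φ, hφ, hyconv⟩ := hYc.tendsto_subseq hyY
    have huφ : Filter.Tendsto (fun k => u (φ k)) Filter.atTop (nhds x) :=
      hu.comp hφ.tendsto_atTop
    have htp : Filter.Tendsto (fun k => (u (φ k), y (φ k))) Filter.atTop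
        (nhds (x, ylim)) := huφ.prodMk_nhds hyconv
    have hQlim : Filter.Tendsto (fun k => Q (u (φ k)) (y (φ k))) Filter.atTop
        (nhds (Q x ylim)) := (hQ.tendsto (x, ylim)).comp htp
    have hPlim : Filter.Tendsto (fun k => P (u (φ k)) (y (φ k))) Filter.atTop
        (nhds (P x ylim)) := (hP.tendsto (x, ylim)).comp htp
    -- ylim is in the argmin set at x
    have hylimS : ylim ∈ argminSet Q Y x := by
      refine ⟨hylimY, fun y' hy' => ?_⟩
      have htp' : Filter.Tendsto (fun k => (u (φ k), y')) Filter.atTop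
          (nhds (x, y')) := huφ.prodMk_nhds tendsto_const_nhds
      have hQ'lim : Filter.Tendsto (fun k => Q (u (φ k)) y') Filter.atTop
          (nhds (Q x y')) := (hQ.tendsto (x, y')).comp htp'
      exact le_of_tendsto_of_tendsto' hQlim hQ'lim
        (fun k => (hyS (φ k)).2 y' hy')
    -- P values along the subsequence are ≤ c
    have hPle : ∀ k, P (u (φ k)) (y (φ k)) ≤ c := by
      intro k
      have := hule (φ k)
      rw [hval (φ k)] at this
      exact EReal.coe_le_coe_iff.mp this
    have hPxc : P x ylim ≤ c := le_of_tendsto hPlim (Filter.Eventually.of_forall hPle)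
    have : valOpt P Q Y x ≤ ((c : ℝ) : EReal) :=
      le_trans (iInf₂_le ylim hylimS) (EReal.coe_le_coe_iff.mpr hPxc)
    exact absurd hc (not_lt.mpr this)
end
end

section
/- Let P, Q : ℝⁿ × ℝᵐ → ℝ be continuous functions and let 𝒴 ⊆ ℝᵐ be a nonempty compact set. Then the pessimistic value function φ_p : ℝⁿ → ℝ, φ_p(x) = max_{y ∈ Θ(x)} P(x,y), is real-valued and upper semicontinuous on ℝⁿ. -/
open Set

noncomputable section

section Aux

variable {n m : ℕ} {P Q : (Fin n → ℝ) → (Fin m → ℝ) → ℝ} {Y : Set (Fin m → ℝ)}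

lemma cont_slice (hQ : Continuous (Function.uncurry Q)) (x : Fin n → ℝ) :
    Continuous (Q x) := hQ.comp (Continuous.prodMk_right x)

lemma argmin_nonempty (hQ : Continuous (Function.uncurry Q)) (hYne : Y.Nonempty)
    (hYc : IsCompact Y) (x : Fin n → ℝ) : (argminSet Q Y x).Nonempty := by
  obtain ⟨y, hy, hmin⟩ := hYc.exists_isMinOn hYne (cont_slice hQ x).continuousOn
  exact ⟨y, hy, fun y' hy' => hmin hy'⟩

lemma argmin_compact (hQ : Continuous (Function.uncurry Q))
    (hYc : IsCompact Y) (x : Fin n → ℝ) : IsCompact (argminSet Q Y x) := by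
  have h : argminSet Q Y x = Y ∩ ⋂ y' ∈ Y, {y | Q x y ≤ Q x y'} := by
    ext y; simp [argminSet, Set.mem_iInter]
  rw [h]
  exact hYc.inter_right <| isClosed_biInter fun y' _ =>
    isClosed_le (cont_slice hQ x) continuous_const

lemma valPess_attained (hP : Continuous (Function.uncurry P))
    (hQ : Continuous (Function.uncurry Q)) (hYne : Y.Nonempty)
    (hYc : IsCompact Y) (x : Fin n → ℝ) :
    ∃ y ∈ argminSet Q Y x, valPess P Q Y x = ((P x y : ℝ) : EReal) ∧
      ∀ z ∈ argminSet Q Y x, P x z ≤ P x y := by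
  obtain ⟨y, hy, hmax⟩ := (argmin_compact hQ hYc x).exists_isMaxOn
    (argmin_nonempty hQ hYne hYc x) (cont_slice hP x).continuousOn
  refine ⟨y, hy, ?_, fun z hz => hmax hz⟩
  refine le_antisymm (iSup₂_le fun z hz => EReal.coe_le_coe_iff.2 (hmax hz)) ?_
  exact le_iSup₂_of_le y hy le_rfl

end Aux

section Main

variable {n m : ℕ} {P Q : (Fin n → ℝ) → (Fin m → ℝ) → ℝ} {Y : Set (Fin m → ℝ)}

/-- Local step of the covering argument. -/
lemma local_step (hP : Continuous (Function.uncurry P))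
    (hQ : Continuous (Function.uncurry Q))
    (x₀ : Fin n → ℝ) (d : ℝ)
    (hd : ∀ y ∈ argminSet Q Y x₀, P x₀ y < d)
    (y : Fin m → ℝ) (hy : y ∈ Y) :
    ∃ U ∈ nhds x₀, ∃ V ∈ nhds y,
      ∀ x ∈ U, ∀ z ∈ V, z ∈ argminSet Q Y x → P x z < d := by
  by_cases hcase : ∀ y' ∈ Y, Q x₀ y ≤ Q x₀ y'
  · -- y is in the argmin set at x₀, so P x₀ y < d; use continuity of P
    have hPy : P x₀ y < d := hd y ⟨hy, hcase⟩
    have hopen : (Function.uncurry P) ⁻¹' Set.Iio d ∈ nhds (x₀, y) :=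
      (isOpen_Iio.preimage hP).mem_nhds hPy
    rw [mem_nhds_prod_iff] at hopen
    obtain ⟨U, hU, V, hV, hUV⟩ := hopen
    exact ⟨U, hU, V, hV, fun x hx z hz _ => hUV (Set.mk_mem_prod hx hz)⟩
  · -- y is not a minimizer at x₀: there is y' ∈ Y with Q x₀ y' < Q x₀ y
    push_neg at hcase
    obtain ⟨y', hy', hlt⟩ := hcase
    have hg : Continuous (fun p : (Fin n → ℝ) × (Fin m → ℝ) =>
        Q p.1 p.2 - Q p.1 y') := by
      have h1 : Continuous (fun p : (Fin n → ℝ) × (Fin m → ℝ) => Q p.1 y') :=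
        hQ.comp (continuous_fst.prodMk continuous_const)
      exact hQ.sub h1
    have hopen : (fun p : (Fin n → ℝ) × (Fin m → ℝ) => Q p.1 p.2 - Q p.1 y') ⁻¹'
        Set.Ioi 0 ∈ nhds (x₀, y) :=
      (isOpen_Ioi.preimage hg).mem_nhds (by simpa using hlt)
    rw [mem_nhds_prod_iff] at hopen
    obtain ⟨U, hU, V, hV, hUV⟩ := hopen
    refine ⟨U, hU, V, hV, fun x hx z hz hzmin => absurd (hzmin.2 y' hy') ?_⟩
    have := hUV (Set.mk_mem_prod hx hz)
    simp only [Set.mem_preimage, Set.mem_Ioi, sub_pos] at this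
    exact not_le.2 this

lemma eventually_lt (hP : Continuous (Function.uncurry P))
    (hQ : Continuous (Function.uncurry Q)) (hYc : IsCompact Y)
    (x₀ : Fin n → ℝ) (d : ℝ)
    (hd : ∀ y ∈ argminSet Q Y x₀, P x₀ y < d) :
    ∀ᶠ x in nhds x₀, ∀ z ∈ argminSet Q Y x, P x z < d := by
  choose U hU V hV key using local_step hP hQ x₀ d hd
  obtain ⟨t, hcover⟩ := hYc.elim_nhds_subcover' V hV
  have hUmem : (⋂ y ∈ t, U y.1 y.2) ∈ nhds x₀ :=
    (Filter.biInter_finset_mem t).2 fun y _ => hU y.1 y.2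
  filter_upwards [hUmem] with x hx z hz
  obtain ⟨y, hyt, hzV⟩ := Set.mem_iUnion₂.1 (hcover hz.1)
  have hxU : x ∈ U y.1 y.2 := by
    simp only [Set.mem_iInter] at hx
    exact hx y hyt
  exact key y.1 y.2 x hxU z hzV hz

end Main

/-- for continuous `P, Q` and nonempty compact `𝒴`, the pessimistic value
function is real-valued and upper semicontinuous. -/
theorem valPess_real_valued_usc (n m : ℕ)
    (P Q : (Fin n → ℝ) → (Fin m → ℝ) → ℝ)
    (hP : Continuous (Function.uncurry P)) (hQ : Continuous (Function.uncurry Q))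
    (Y : Set (Fin m → ℝ)) (hYne : Y.Nonempty) (hYc : IsCompact Y) :
    (∀ x, ∃ r : ℝ, valPess P Q Y x = (r : EReal)) ∧
    UpperSemicontinuous (valPess P Q Y) := by
  constructor
  · intro x
    obtain ⟨y, hy, hval, _⟩ := valPess_attained hP hQ hYne hYc x
    exact ⟨P x y, hval⟩
  · intro x₀ c hc
    obtain ⟨y₀, hy₀, hval₀, hmax₀⟩ := valPess_attained hP hQ hYne hYc x₀
    rw [hval₀] at hc
    obtain ⟨d, hd1, hd2⟩ := EReal.lt_iff_exists_real_btwn.1 hc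
    have hd1' : P x₀ y₀ < d := EReal.coe_lt_coe_iff.1 hd1
    have hall : ∀ y ∈ argminSet Q Y x₀, P x₀ y < d :=
      fun y hy => lt_of_le_of_lt (hmax₀ y hy) hd1'
    filter_upwards [eventually_lt hP hQ hYc x₀ d hall] with x hx
    obtain ⟨y, hy, hval, _⟩ := valPess_attained hP hQ hYne hYc x
    rw [hval]
    exact lt_trans (EReal.coe_lt_coe_iff.2 (hx y hy)) hd2
end
end

section
/- Let h : ℝⁿ → ℝ ∪ {±∞} be any extended-real-valued semi-algebraic function. Then there exist m ∈ ℕ and polynomials P, Q : ℝⁿ × ℝᵐ → ℝ such that the optimistic value function φ_o of the bilevel problem with upper level P, lower level Q, and unconstrained lower-level feasible set 𝒴 = ℝᵐ satisfies φ_o = h. Combined with the semi-algebraicity of all such value functions, the class of optimistic value functions of polynomial bilevel problems with unbounded box lower-level constraints is exactly the class of extended-real-valued semi-algebraic functions. -/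
open Set

noncomputable section

namespace BilevelAux

open MvPolynomial

/-- `S` is the projection of the zero set of the everywhere-nonnegative polynomial `F`. -/
def Rep {ι : Type} (S : Set (ι → ℝ)) (κ : Type) (F : MvPolynomial (ι ⊕ κ) ℝ) : Prop :=
  (∀ z w, 0 ≤ eval (Sum.elim z w) F) ∧
  ∀ z, z ∈ S ↔ ∃ w : κ → ℝ, eval (Sum.elim z w) F = 0

theorem rep_basic {ι : Type} (p : MvPolynomial ι ℝ) (k : ℕ) (q : Fin k → MvPolynomial ι ℝ) :
    Rep {x | eval x p = 0 ∧ ∀ j, 0 < eval x (q j)} (Fin k)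
      ((rename Sum.inl p) ^ 2 +
        ∑ j, ((rename (Sum.inl : ι → ι ⊕ Fin k) (q j)) * (X (Sum.inr j)) ^ 2 - 1) ^ 2) := by
  have hev : ∀ (z : ι → ℝ) (w : Fin k → ℝ),
      eval (Sum.elim z w) ((rename Sum.inl p) ^ 2 +
        ∑ j, ((rename (Sum.inl : ι → ι ⊕ Fin k) (q j)) * (X (Sum.inr j)) ^ 2 - 1) ^ 2)
      = (eval z p) ^ 2 + ∑ j, (eval z (q j) * (w j) ^ 2 - 1) ^ 2 := by
    intro z w
    simp [eval_rename, Sum.elim_comp_inl]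
  constructor
  · intro z w; rw [hev]; positivity
  · intro z
    constructor
    · rintro ⟨hp, hq⟩
      refine ⟨fun j => (Real.sqrt (eval z (q j)))⁻¹, ?_⟩
      rw [hev, hp]
      have hz : ∀ j : Fin k, (eval z (q j) * ((Real.sqrt (eval z (q j)))⁻¹) ^ 2 - 1) ^ 2 = 0 := by
        intro j
        have hc := hq j
        rw [inv_pow, Real.sq_sqrt hc.le, mul_inv_cancel₀ hc.ne', sub_self]
        simp
      rw [Finset.sum_eq_zero fun j _ => hz j]
      norm_num
    · rintro ⟨w, hw⟩
      rw [hev] at hw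
      have hnn : (0:ℝ) ≤ (eval z p) ^ 2 := sq_nonneg _
      have hsn : (0:ℝ) ≤ ∑ j, (eval z (q j) * (w j) ^ 2 - 1) ^ 2 :=
        Finset.sum_nonneg fun j _ => sq_nonneg _
      have h1 : (eval z p) ^ 2 = 0 := by linarith
      have h2 : ∑ j, (eval z (q j) * (w j) ^ 2 - 1) ^ 2 = 0 := by linarith
      have h3 := (Finset.sum_eq_zero_iff_of_nonneg (fun j _ => sq_nonneg _)).mp h2
      refine ⟨sq_eq_zero_iff.mp h1, fun j => ?_⟩
      have h4 : eval z (q j) * (w j) ^ 2 - 1 = 0 :=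
          sq_eq_zero_iff.mp (h3 j (Finset.mem_univ j))
      nlinarith [sq_nonneg (w j)]

theorem rep_empty {ι : Type} : Rep (∅ : Set (ι → ℝ)) Unit 1 := by
  constructor
  · intro z w; simp
  · intro z; simp

theorem rep_union {ι κ₁ κ₂ : Type} {S T : Set (ι → ℝ)}
    {F₁ : MvPolynomial (ι ⊕ κ₁) ℝ} {F₂ : MvPolynomial (ι ⊕ κ₂) ℝ}
    (h₁ : Rep S κ₁ F₁) (h₂ : Rep T κ₂ F₂) :
    Rep (S ∪ T) (κ₁ ⊕ κ₂)
      ((rename (Sum.map id Sum.inl) F₁) * (rename (Sum.map id Sum.inr) F₂)) := by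
  have hc1 : ∀ (z : ι → ℝ) (w : κ₁ ⊕ κ₂ → ℝ),
      Sum.elim z w ∘ (Sum.map id Sum.inl : ι ⊕ κ₁ → ι ⊕ (κ₁ ⊕ κ₂)) =
        Sum.elim z (w ∘ Sum.inl) := by
    intro z w; funext v; cases v <;> rfl
  have hc2 : ∀ (z : ι → ℝ) (w : κ₁ ⊕ κ₂ → ℝ),
      Sum.elim z w ∘ (Sum.map id Sum.inr : ι ⊕ κ₂ → ι ⊕ (κ₁ ⊕ κ₂)) =
        Sum.elim z (w ∘ Sum.inr) := by
    intro z w; funext v; cases v <;> rfl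
  have hev : ∀ (z : ι → ℝ) (w : κ₁ ⊕ κ₂ → ℝ),
      eval (Sum.elim z w) ((rename (Sum.map id Sum.inl) F₁) * (rename (Sum.map id Sum.inr) F₂))
      = eval (Sum.elim z (w ∘ Sum.inl)) F₁ * eval (Sum.elim z (w ∘ Sum.inr)) F₂ := by
    intro z w
    rw [map_mul, eval_rename, eval_rename, hc1, hc2]
  constructor
  · intro z w; rw [hev]; exact mul_nonneg (h₁.1 _ _) (h₂.1 _ _)
  · intro z
    constructor
    · rintro (hz | hz)
      · obtain ⟨w₁, hw₁⟩ := (h₁.2 z).mp hz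
        refine ⟨Sum.elim w₁ 0, ?_⟩
        rw [hev]
        have : (Sum.elim w₁ (0 : κ₂ → ℝ)) ∘ Sum.inl = w₁ := rfl
        rw [this, hw₁, zero_mul]
      · obtain ⟨w₂, hw₂⟩ := (h₂.2 z).mp hz
        refine ⟨Sum.elim 0 w₂, ?_⟩
        rw [hev]
        have : (Sum.elim (0 : κ₁ → ℝ) w₂) ∘ Sum.inr = w₂ := rfl
        rw [this, hw₂, mul_zero]
    · rintro ⟨w, hw⟩
      rw [hev] at hw
      rcases mul_eq_zero.mp hw with hz | hz
      · exact Or.inl ((h₁.2 z).mpr ⟨_, hz⟩)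
      · exact Or.inr ((h₂.2 z).mpr ⟨_, hz⟩)

theorem rep_of_iUnion {ι : Type} [Fintype ι] : ∀ (N : ℕ) (T : Fin N → Set (ι → ℝ)),
    (∀ i, IsBasicSemialgebraic (T i)) →
    ∃ (κ : Type) (_ : Fintype κ) (F : MvPolynomial (ι ⊕ κ) ℝ), Rep (⋃ i, T i) κ F := by
  intro N
  induction N with
  | zero =>
    intro T hT
    refine ⟨Unit, inferInstance, 1, ?_⟩
    rw [Set.iUnion_of_empty]
    exact rep_empty
  | succ N ih =>
    intro T hT
    obtain ⟨κ₂, _, F₂, hF₂⟩ := ih (fun i => T i.succ) (fun i => hT i.succ)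
    obtain ⟨p, k, q, hTo⟩ := hT 0
    have h₁ : Rep (T 0) (Fin k)
        ((rename Sum.inl p) ^ 2 +
          ∑ j, ((rename (Sum.inl : ι → ι ⊕ Fin k) (q j)) * (X (Sum.inr j)) ^ 2 - 1) ^ 2) := by
      rw [hTo]; exact rep_basic p k q
    have hu : (⋃ i, T i) = T 0 ∪ ⋃ i : Fin N, T i.succ := by
      ext x
      simp only [Set.mem_iUnion, Set.mem_union, Fin.exists_fin_succ]
    rw [hu]
    exact ⟨_, inferInstance, _, rep_union h₁ hF₂⟩

theorem rep_of_semialgebraic {ι : Type} [Fintype ι] {S : Set (ι → ℝ)}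
    (hS : IsSemialgebraic S) :
    ∃ (κ : Type) (_ : Fintype κ) (F : MvPolynomial (ι ⊕ κ) ℝ), Rep S κ F := by
  obtain ⟨N, T, hT, rfl⟩ := hS
  exact rep_of_iUnion N T hT

end BilevelAux

namespace Construct

open MvPolynomial

variable {n : ℕ} (κG κB κT : Type) [Fintype κG] [Fintype κB] [Fintype κT]

/-- The lower-level variable index type: `r`, witnesses for graph/bot/top, `s`, `u`. -/
abbrev Vt : Type := Unit ⊕ (κG ⊕ (κB ⊕ (κT ⊕ (Unit ⊕ Unit))))

def mV : ℕ := Fintype.card (Vt κG κB κT)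

def eV : Vt κG κB κT ≃ Fin (mV κG κB κT) := Fintype.equivFin _

def iR : Fin (mV κG κB κT) := eV κG κB κT (Sum.inl ())
def iG (v : κG) : Fin (mV κG κB κT) := eV κG κB κT (Sum.inr (Sum.inl v))
def iB (v : κB) : Fin (mV κG κB κT) := eV κG κB κT (Sum.inr (Sum.inr (Sum.inl v)))
def iT (v : κT) : Fin (mV κG κB κT) := eV κG κB κT (Sum.inr (Sum.inr (Sum.inr (Sum.inl v))))
def iS : Fin (mV κG κB κT) := eV κG κB κT (Sum.inr (Sum.inr (Sum.inr (Sum.inr (Sum.inl ())))))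
def iU : Fin (mV κG κB κT) := eV κG κB κT (Sum.inr (Sum.inr (Sum.inr (Sum.inr (Sum.inr ())))))

def mk (r : ℝ) (g : κG → ℝ) (b : κB → ℝ) (t : κT → ℝ) (s u : ℝ) :
    Fin (mV κG κB κT) → ℝ :=
  fun i => Sum.elim (fun _ => r)
    (Sum.elim g (Sum.elim b (Sum.elim t (Sum.elim (fun _ => s) (fun _ => u)))))
    ((eV κG κB κT).symm i)

variable {κG κB κT}

@[simp] lemma mk_iR (r g b t s u) : mk κG κB κT r g b t s u (iR κG κB κT) = r := by
  simp [mk, iR]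
@[simp] lemma mk_iG (r g b t s u v) : mk κG κB κT r g b t s u (iG κG κB κT v) = g v := by
  simp [mk, iG]
@[simp] lemma mk_iB (r g b t s u v) : mk κG κB κT r g b t s u (iB κG κB κT v) = b v := by
  simp [mk, iB]
@[simp] lemma mk_iT (r g b t s u v) : mk κG κB κT r g b t s u (iT κG κB κT v) = t v := by
  simp [mk, iT]
@[simp] lemma mk_iS (r g b t s u) : mk κG κB κT r g b t s u (iS κG κB κT) = s := by
  simp [mk, iS]
@[simp] lemma mk_iU (r g b t s u) : mk κG κB κT r g b t s u (iU κG κB κT) = u := by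
  simp [mk, iU]

variable (FG : MvPolynomial ((Fin n ⊕ Unit) ⊕ κG) ℝ)
variable (FB : MvPolynomial (Fin n ⊕ κB) ℝ)
variable (FT : MvPolynomial (Fin n ⊕ κT) ℝ)

def Af (x : Fin n → ℝ) (y : Fin (mV κG κB κT) → ℝ) : ℝ :=
  eval (Sum.elim (Sum.elim x (fun _ => y (iR κG κB κT))) (fun v => y (iG κG κB κT v))) FG

def Bf (x : Fin n → ℝ) (y : Fin (mV κG κB κT) → ℝ) : ℝ :=
  eval (Sum.elim x (fun v => y (iB κG κB κT v))) FB

def Tf (x : Fin n → ℝ) (y : Fin (mV κG κB κT) → ℝ) : ℝ :=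
  eval (Sum.elim x (fun v => y (iT κG κB κT v))) FT

def Cf (x : Fin n → ℝ) (y : Fin (mV κG κB κT) → ℝ) : ℝ :=
  ((Tf FT x y + (y (iS κG κB κT)) ^ 2) * y (iU κG κB κT) - 1) ^ 2 +
    (Tf FT x y + (y (iS κG κB κT)) ^ 2) ^ 2

def Qf (x : Fin n → ℝ) (y : Fin (mV κG κB κT) → ℝ) : ℝ :=
  Af FG x y * (Bf FB x y * Cf FT x y)

def Pf (_x : Fin n → ℝ) (y : Fin (mV κG κB κT) → ℝ) : ℝ := y (iR κG κB κT)

def sG : ((Fin n ⊕ Unit) ⊕ κG) → (Fin n ⊕ Fin (mV κG κB κT)) :=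
  Sum.elim (Sum.elim Sum.inl (fun _ => Sum.inr (iR κG κB κT))) (fun v => Sum.inr (iG κG κB κT v))

def sB : (Fin n ⊕ κB) → (Fin n ⊕ Fin (mV κG κB κT)) :=
  Sum.elim Sum.inl (fun v => Sum.inr (iB κG κB κT v))

def sT : (Fin n ⊕ κT) → (Fin n ⊕ Fin (mV κG κB κT)) :=
  Sum.elim Sum.inl (fun v => Sum.inr (iT κG κB κT v))

lemma Af_mk (x r g b t s u) :
    Af FG x (mk κG κB κT r g b t s u) = eval (Sum.elim (Sum.elim x (fun _ : Unit => r)) g) FG := by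
  have hfun : (Sum.elim (Sum.elim x (fun _ : Unit => mk κG κB κT r g b t s u (iR κG κB κT)))
      (fun v => mk κG κB κT r g b t s u (iG κG κB κT v))) =
      Sum.elim (Sum.elim x (fun _ : Unit => r)) g := by
    funext v; rcases v with (a | u') | v <;> simp
  unfold Af; rw [hfun]

lemma Bf_mk (x r g b t s u) :
    Bf FB x (mk κG κB κT r g b t s u) = eval (Sum.elim x b) FB := by
  have hfun : (Sum.elim x (fun v => mk κG κB κT r g b t s u (iB κG κB κT v))) =
      Sum.elim x b := by
    funext v; rcases v with a | v <;> simp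
  unfold Bf; rw [hfun]

lemma Tf_mk (x r g b t s u) :
    Tf FT x (mk κG κB κT r g b t s u) = eval (Sum.elim x t) FT := by
  have hfun : (Sum.elim x (fun v => mk κG κB κT r g b t s u (iT κG κB κT v))) =
      Sum.elim x t := by
    funext v; rcases v with a | v <;> simp
  unfold Tf; rw [hfun]

lemma isPolyMap_Pf : IsPolyMap (Pf (n := n) (κG := κG) (κB := κB) (κT := κT)) := by
  refine ⟨X (Sum.inr (iR κG κB κT)), fun x y => ?_⟩
  simp [Pf]

lemma isPolyMap_Qf : IsPolyMap (Qf FG FB FT) := by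
  classical
  refine ⟨(rename (sG (n := n) (κG := κG) (κB := κB) (κT := κT)) FG) *
    ((rename (sB (n := n) (κG := κG) (κB := κB) (κT := κT)) FB) *
      ((((rename (sT (n := n) (κG := κG) (κB := κB) (κT := κT)) FT) +
          (X (Sum.inr (iS κG κB κT))) ^ 2) * X (Sum.inr (iU κG κB κT)) - 1) ^ 2 +
        ((rename (sT (n := n) (κG := κG) (κB := κB) (κT := κT)) FT) +
          (X (Sum.inr (iS κG κB κT))) ^ 2) ^ 2)), fun x y => ?_⟩
  have hG : Sum.elim x y ∘ (sG (n := n) (κG := κG) (κB := κB) (κT := κT)) =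
      Sum.elim (Sum.elim x (fun _ => y (iR κG κB κT))) (fun v => y (iG κG κB κT v)) := by
    funext v; rcases v with (a | u') | v <;> rfl
  have hB : Sum.elim x y ∘ (sB (n := n) (κG := κG) (κB := κB) (κT := κT)) =
      Sum.elim x (fun v => y (iB κG κB κT v)) := by
    funext v; rcases v with a | v <;> rfl
  have hT : Sum.elim x y ∘ (sT (n := n) (κG := κG) (κB := κB) (κT := κT)) =
      Sum.elim x (fun v => y (iT κG κB κT v)) := by
    funext v; rcases v with a | v <;> rfl
  simp only [Qf, Af, Bf, Cf, Tf, map_mul, map_add, map_sub, map_pow, map_one,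
    eval_rename, eval_X, hG, hB, hT, Sum.elim_inr]

end Construct
namespace Construct

open MvPolynomial BilevelAux

lemma erealEqBot (a : EReal) (H : ∀ r : ℝ, a ≤ (r : EReal)) : a = ⊥ := by
  induction a using EReal.rec with
  | bot => rfl
  | coe r =>
    have h1 := H (r - 1)
    rw [EReal.coe_le_coe_iff] at h1
    linarith
  | top => exact absurd (H 0) (by simp)

lemma erealTrichot (a : EReal) : a = ⊥ ∨ a = ⊤ ∨ ∃ r : ℝ, a = (r : EReal) := by
  induction a using EReal.rec <;> simp

theorem main {n : ℕ} {κG κB κT : Type} [Fintype κG] [Fintype κB] [Fintype κT]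
    (FG : MvPolynomial ((Fin n ⊕ Unit) ⊕ κG) ℝ) (FB : MvPolynomial (Fin n ⊕ κB) ℝ)
    (FT : MvPolynomial (Fin n ⊕ κT) ℝ)
    (h : (Fin n → ℝ) → EReal)
    (repG : Rep {z : (Fin n ⊕ Unit) → ℝ | h (z ∘ Sum.inl) = ((z (Sum.inr ()) : ℝ) : EReal)} κG FG)
    (repB : Rep {x | h x = ⊥} κB FB)
    (repT : Rep {x | h x = ⊤} κT FT)
    (x : Fin n → ℝ) :
    valOpt (Pf (n := n) (κG := κG) (κB := κB) (κT := κT)) (Qf FG FB FT) Set.univ x = h x := by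
  classical
  have memG : ∀ r : ℝ, (h x = (r : EReal)) ↔
      ∃ w : κG → ℝ, eval (Sum.elim (Sum.elim x (fun _ : Unit => r)) w) FG = 0 := by
    intro r
    have h1 := repG.2 (Sum.elim x (fun _ : Unit => r))
    simpa using h1
  have memB : (h x = ⊥) ↔ ∃ w : κB → ℝ, eval (Sum.elim x w) FB = 0 := repB.2 x
  have memT : (h x = ⊤) ↔ ∃ w : κT → ℝ, eval (Sum.elim x w) FT = 0 := repT.2 x
  have hA0 : ∀ y : Fin (mV κG κB κT) → ℝ, 0 ≤ Af FG x y := fun y => repG.1 _ _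
  have hB0 : ∀ y : Fin (mV κG κB κT) → ℝ, 0 ≤ Bf FB x y := fun y => repB.1 _ _
  have hT0 : ∀ y : Fin (mV κG κB κT) → ℝ, 0 ≤ Tf FT x y := fun y => repT.1 _ _
  have hC0 : ∀ y : Fin (mV κG κB κT) → ℝ, 0 < Cf FT x y := by
    intro y
    have ha0 : 0 ≤ Tf FT x y + (y (iS κG κB κT)) ^ 2 := add_nonneg (hT0 y) (sq_nonneg _)
    rcases eq_or_lt_of_le ha0 with hz | hz
    · unfold Cf; rw [← hz]; norm_num
    · unfold Cf
      nlinarith [sq_nonneg ((Tf FT x y + (y (iS κG κB κT)) ^ 2) * y (iU κG κB κT) - 1)]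
  have hQ0 : ∀ y : Fin (mV κG κB κT) → ℝ, 0 ≤ Qf FG FB FT x y :=
    fun y => mul_nonneg (hA0 y) (mul_nonneg (hB0 y) (hC0 y).le)
  have hArg : ∀ y₀, Qf FG FB FT x y₀ = 0 →
      argminSet (Qf FG FB FT) Set.univ x = {y | Qf FG FB FT x y = 0} := by
    intro y₀ h0
    ext y
    simp only [argminSet, Set.mem_setOf_eq, Set.mem_univ, true_and, forall_const]
    constructor
    · intro hy
      have h1 := hy y₀
      have h2 := hQ0 y
      rw [h0] at h1
      linarith
    · intro hy y'
      rw [hy]; exact hQ0 y'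
  rcases erealTrichot (h x) with hx | hx | ⟨r₀, hx⟩
  · -- h x = ⊥
    obtain ⟨wb0, hwb0⟩ := memB.mp hx
    have hmem : ∀ r : ℝ, (mk κG κB κT r 0 wb0 0 0 0) ∈ argminSet (Qf FG FB FT) Set.univ x := by
      intro r
      refine ⟨Set.mem_univ _, fun y' _ => ?_⟩
      have hq : Qf FG FB FT x (mk κG κB κT r 0 wb0 0 0 0) = 0 := by
        unfold Qf; rw [Bf_mk, hwb0, zero_mul, mul_zero]
      rw [hq]; exact hQ0 y'
    rw [hx]
    refine erealEqBot _ fun r => ?_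
    have h1 : valOpt (Pf (n := n) (κG := κG) (κB := κB) (κT := κT)) (Qf FG FB FT) Set.univ x ≤
        ((Pf (n := n) x (mk κG κB κT r 0 wb0 0 0 0) : ℝ) : EReal) :=
      iInf₂_le _ (hmem r)
    simpa [Pf] using h1
  · -- h x = ⊤
    obtain ⟨wt0, hwt0⟩ := memT.mp hx
    have hApos : ∀ y : Fin (mV κG κB κT) → ℝ, 0 < Af FG x y := by
      intro y
      rcases (hA0 y).eq_or_lt with hz | hz
      · exfalso
        have h1 : h x = ((y (iR κG κB κT) : ℝ) : EReal) :=
          (memG _).mpr ⟨fun v => y (iG κG κB κT v), hz.symm⟩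
        rw [hx] at h1
        exact EReal.top_ne_coe _ h1
      · exact hz
    have hBpos : ∀ y : Fin (mV κG κB κT) → ℝ, 0 < Bf FB x y := by
      intro y
      rcases (hB0 y).eq_or_lt with hz | hz
      · exfalso
        have h1 : h x = ⊥ := memB.mpr ⟨fun v => y (iB κG κB κT v), hz.symm⟩
        rw [hx] at h1
        simp at h1
      · exact hz
    have hempty : argminSet (Qf FG FB FT) Set.univ x = ∅ := by
      ext y
      simp only [argminSet, Set.mem_setOf_eq, Set.mem_univ, true_and, forall_const,
        Set.mem_empty_iff_false, iff_false, not_forall, not_le]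
      set A₀ : ℝ := eval (Sum.elim (Sum.elim x (fun _ : Unit => 0)) (0 : κG → ℝ)) FG with hA₀def
      set B₀ : ℝ := eval (Sum.elim x (0 : κB → ℝ)) FB with hB₀def
      have hA₀ : 0 ≤ A₀ := repG.1 _ _
      have hB₀ : 0 ≤ B₀ := repB.1 _ _
      set ε := Qf FG FB FT x y with hεdef
      have hεpos : 0 < ε := mul_pos (hApos y) (mul_pos (hBpos y) (hC0 y))
      set δ := min 1 (ε / (A₀ * B₀ + 1)) with hδdef
      have hδpos : 0 < δ := lt_min one_pos (div_pos hεpos (by positivity))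
      set s := Real.sqrt (Real.sqrt δ) with hsdef
      have hs2 : s ^ 2 = Real.sqrt δ := Real.sq_sqrt (Real.sqrt_nonneg δ)
      have hsd : (s ^ 2) ^ 2 = δ := by rw [hs2]; exact Real.sq_sqrt hδpos.le
      have hs2pos : 0 < s ^ 2 := by rw [hs2]; exact Real.sqrt_pos.mpr hδpos
      refine ⟨mk κG κB κT 0 0 0 wt0 s (s ^ 2)⁻¹, ?_⟩
      have hQy' : Qf FG FB FT x (mk κG κB κT 0 0 0 wt0 s (s ^ 2)⁻¹) = A₀ * (B₀ * δ) := by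
        unfold Qf Cf
        rw [Af_mk, Bf_mk, Tf_mk, hwt0, mk_iS, mk_iU, zero_add,
          mul_inv_cancel₀ hs2pos.ne', hsd]
        norm_num
        rfl
      rw [hQy']
      have hδle : δ ≤ ε / (A₀ * B₀ + 1) := min_le_right _ _
      have h2 : δ * (A₀ * B₀ + 1) ≤ ε := by
        rw [← le_div_iff₀ (by positivity)]
        exact hδle
      nlinarith
    rw [hx]
    unfold valOpt
    rw [hempty]
    exact iInf_emptyset
  · -- h x = r₀
    obtain ⟨wg0, hwg0⟩ := (memG r₀).mp hx
    have hQz : Qf FG FB FT x (mk κG κB κT r₀ wg0 0 0 0 0) = 0 := by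
      unfold Qf; rw [Af_mk, hwg0, zero_mul]
    have hargm := hArg _ hQz
    have hmem : mk κG κB κT r₀ wg0 0 0 0 0 ∈ argminSet (Qf FG FB FT) Set.univ x := by
      rw [hargm]; exact hQz
    have hval : ∀ y ∈ argminSet (Qf FG FB FT) Set.univ x,
        Pf (n := n) x y = r₀ := by
      intro y hy
      rw [hargm] at hy
      have hy' : Qf FG FB FT x y = 0 := hy
      unfold Qf at hy'
      rcases mul_eq_zero.mp hy' with hz | hz
      · have h1 : h x = ((y (iR κG κB κT) : ℝ) : EReal) := by
          refine (memG _).mpr ⟨fun v => y (iG κG κB κT v), ?_⟩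
          exact hz
        rw [hx] at h1
        have h2 : r₀ = y (iR κG κB κT) := by exact_mod_cast h1
        unfold Pf
        exact h2.symm
      · rcases mul_eq_zero.mp hz with hz' | hz'
        · exfalso
          have h1 : h x = ⊥ := memB.mpr ⟨fun v => y (iB κG κB κT v), hz'⟩
          rw [hx] at h1
          exact EReal.coe_ne_bot _ h1
        · exact absurd hz' (hC0 y).ne'
    rw [hx]
    apply le_antisymm
    · have h1 : valOpt (Pf (n := n) (κG := κG) (κB := κB) (κT := κT)) (Qf FG FB FT) Set.univ x ≤
          ((Pf (n := n) x (mk κG κB κT r₀ wg0 0 0 0 0) : ℝ) : EReal) :=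
        iInf₂_le _ hmem
      rwa [hval _ hmem] at h1
    · refine le_iInf₂ fun y hy => ?_
      rw [hval y hy]

end Construct


/-- every extended-real-valued semi-algebraic function is the optimistic value
function of a polynomial bilevel problem with unconstrained lower level (`𝒴 = ℝᵐ`). -/
theorem ereal_semialgebraic_is_optimistic_value (n : ℕ) (h : (Fin n → ℝ) → EReal)
    (hh : IsERealSemialgebraicFun h) :
    ∃ (m : ℕ) (P Q : (Fin n → ℝ) → (Fin m → ℝ) → ℝ),
      IsPolyMap P ∧ IsPolyMap Q ∧
      ∀ x, valOpt P Q Set.univ x = h x := by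
  obtain ⟨-, htop, hbot, hgraph⟩ := hh
  obtain ⟨κG, _, FG, repG⟩ := BilevelAux.rep_of_semialgebraic hgraph
  obtain ⟨κB, _, FB, repB⟩ := BilevelAux.rep_of_semialgebraic hbot
  obtain ⟨κT, _, FT, repT⟩ := BilevelAux.rep_of_semialgebraic htop
  exact ⟨Construct.mV κG κB κT, Construct.Pf, Construct.Qf FG FB FT,
    Construct.isPolyMap_Pf, Construct.isPolyMap_Qf FG FB FT,
    Construct.main FG FB FT h repG repB repT⟩
end
end

section
/- Let h : ℝⁿ → ℝ ∪ {±∞} be any extended-real-valued semi-algebraic function. Then there exist m ∈ ℕ and polynomials P, Q : ℝⁿ × ℝᵐ → ℝ such that the pessimistic value function φ_p of the bilevel problem with upper level P, lower level Q, and unconstrained lower-level feasible set 𝒴 = ℝᵐ satisfies φ_p = h. -/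
open Set

noncomputable section

namespace BilevelAux
open MvPolynomial


/-- polynomial map in joint variables, over arbitrary index types -/
def Pm {ι κ : Type} (f : (ι → ℝ) → (κ → ℝ) → ℝ) : Prop :=
  ∃ p : MvPolynomial (ι ⊕ κ) ℝ,
    ∀ x y, f x y = MvPolynomial.eval (Sum.elim x y) p

namespace Pm

variable {ι κ : Type} {f g : (ι → ℝ) → (κ → ℝ) → ℝ}

lemma const (c : ℝ) : Pm (fun (_ : ι → ℝ) (_ : κ → ℝ) => c) :=
  ⟨C c, by simp⟩

lemma add (hf : Pm f) (hg : Pm g) : Pm (fun x y => f x y + g x y) := by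
  obtain ⟨p, hp⟩ := hf; obtain ⟨q, hq⟩ := hg
  exact ⟨p + q, by simp [hp, hq]⟩

lemma mul (hf : Pm f) (hg : Pm g) : Pm (fun x y => f x y * g x y) := by
  obtain ⟨p, hp⟩ := hf; obtain ⟨q, hq⟩ := hg
  exact ⟨p * q, by simp [hp, hq]⟩

lemma sub (hf : Pm f) (hg : Pm g) : Pm (fun x y => f x y - g x y) := by
  obtain ⟨p, hp⟩ := hf; obtain ⟨q, hq⟩ := hg
  exact ⟨p - q, by simp [hp, hq]⟩

lemma pow (hf : Pm f) (k : ℕ) : Pm (fun x y => f x y ^ k) := by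
  obtain ⟨p, hp⟩ := hf
  exact ⟨p ^ k, by simp [hp]⟩

lemma coord (j : κ) : Pm (fun (_ : ι → ℝ) (y : κ → ℝ) => y j) :=
  ⟨X (Sum.inr j), by simp⟩

lemma evalL (p : MvPolynomial ι ℝ) :
    Pm (fun (x : ι → ℝ) (_ : κ → ℝ) => MvPolynomial.eval x p) := by
  refine ⟨rename Sum.inl p, fun x y => ?_⟩
  rw [eval_rename]
  simp

lemma comp_gen {ι' κ' : Type} (hf : Pm f) (a : ι → ι' ⊕ κ') (b : κ → ι' ⊕ κ') :
    Pm (fun (x : ι' → ℝ) (y : κ' → ℝ) =>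
      f (Sum.elim x y ∘ a) (Sum.elim x y ∘ b)) := by
  obtain ⟨p, hp⟩ := hf
  refine ⟨rename (Sum.elim a b) p, fun x y => ?_⟩
  rw [eval_rename]
  show f _ _ = _
  rw [hp]
  have e : Sum.elim (Sum.elim x y ∘ a) (Sum.elim x y ∘ b) = Sum.elim x y ∘ Sum.elim a b := by
    funext z; cases z <;> rfl
  rw [e]

lemma finsetSum {A : Type} (s : Finset A) (F : A → (ι → ℝ) → (κ → ℝ) → ℝ)
    (hF : ∀ i ∈ s, Pm (F i)) : Pm (fun x y => ∑ i ∈ s, F i x y) := by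
  classical
  induction s using Finset.induction with
  | empty => simpa using const 0
  | insert _ _ hni ih =>
    rename_i a s
    simp only [Finset.sum_insert hni]
    exact (hF a (Finset.mem_insert_self a s)).add
      (ih fun i hi => hF i (Finset.mem_insert_of_mem hi))

lemma finsetProd {A : Type} (s : Finset A) (F : A → (ι → ℝ) → (κ → ℝ) → ℝ)
    (hF : ∀ i ∈ s, Pm (F i)) : Pm (fun x y => ∏ i ∈ s, F i x y) := by
  classical
  induction s using Finset.induction with
  | empty => simpa using const 1
  | insert _ _ hni ih =>
    rename_i a s
    simp only [Finset.prod_insert hni]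
    exact (hF a (Finset.mem_insert_self a s)).mul
      (ih fun i hi => hF i (Finset.mem_insert_of_mem hi))

end Pm


/-- optimal witness value for the strict-inequality encoding `(a·w² - 1)²`. -/
def wit (a : ℝ) : ℝ := if 0 < a then Real.sqrt a⁻¹ else 0

lemma wit_zero {a : ℝ} (ha : 0 < a) : (a * (wit a) ^ 2 - 1) ^ 2 = 0 := by
  rw [wit, if_pos ha, Real.sq_sqrt (inv_nonneg.mpr ha.le), mul_inv_cancel₀ ha.ne']
  norm_num

lemma wit_min (a t : ℝ) : (a * (wit a) ^ 2 - 1) ^ 2 ≤ (a * t ^ 2 - 1) ^ 2 := by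
  by_cases ha : 0 < a
  · rw [wit_zero ha]; positivity
  · rw [wit, if_neg ha]
    push_neg at ha
    have h1 : a * t ^ 2 ≤ 0 := mul_nonpos_of_nonpos_of_nonneg ha (sq_nonneg t)
    have h2 : (a * (0:ℝ) ^ 2 - 1) ^ 2 = 1 := by norm_num
    rw [h2]
    nlinarith [h1]

lemma cert_exists {ι : Type} [Fintype ι] {S : Set (ι → ℝ)} (hS : IsSemialgebraic S) :
    ∃ (W : Type) (_ : Fintype W) (Cf : (ι → ℝ) → (W → ℝ) → ℝ),
      Pm Cf ∧ (∀ z w, 0 ≤ Cf z w) ∧ (∀ z, z ∈ S ↔ ∃ w, Cf z w = 0) ∧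
      (∀ z, ∃ w₀, ∀ w, Cf z w₀ ≤ Cf z w) := by
  classical
  obtain ⟨N, T, hT, rfl⟩ := hS
  choose p k q hq using hT
  refine ⟨(Σ i : Fin N, Fin (k i)), inferInstance,
    fun z w => ∏ i, ((eval z (p i)) ^ 2 +
      ∑ j, ((eval z (q i j)) * (w ⟨i, j⟩) ^ 2 - 1) ^ 2), ?_, ?_, ?_, ?_⟩
  · apply Pm.finsetProd
    intro i _
    apply Pm.add
    · exact (Pm.evalL (p i)).pow 2
    · apply Pm.finsetSum
      intro j _
      exact (((Pm.evalL (q i j)).mul ((Pm.coord (ι := ι) (⟨i, j⟩ : Σ i, Fin (k i))).pow 2)).sub (Pm.const 1)).pow 2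
  · intro z w
    apply Finset.prod_nonneg
    intro i _
    positivity
  · intro z
    constructor
    · intro hz
      rw [Set.mem_iUnion] at hz
      obtain ⟨i, hi⟩ := hz
      rw [hq i] at hi
      obtain ⟨hp0, hqpos⟩ := hi
      refine ⟨fun s => wit (eval z (q s.1 s.2)), ?_⟩
      apply Finset.prod_eq_zero (Finset.mem_univ i)
      rw [hp0]
      simp only [ne_eq, OfNat.ofNat_ne_zero, not_false_eq_true, zero_pow, zero_add]
      apply Finset.sum_eq_zero
      intro j _
      exact wit_zero (hqpos j)
    · rintro ⟨w, hw⟩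
      obtain ⟨i, -, hi⟩ := Finset.prod_eq_zero_iff.mp hw
      have h1 : (eval z (p i)) ^ 2 = 0 ∧
          ∑ j, ((eval z (q i j)) * (w ⟨i, j⟩) ^ 2 - 1) ^ 2 = 0 := by
        constructor <;> nlinarith [sq_nonneg (eval z (p i)),
          Finset.sum_nonneg (fun j (_ : j ∈ Finset.univ) =>
            sq_nonneg ((eval z (q i j)) * (w ⟨i, j⟩) ^ 2 - 1))]
      have hp0 : eval z (p i) = 0 := by
        have := h1.1; nlinarith [this]
      have hsum := (Finset.sum_eq_zero_iff_of_nonneg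
        (fun j (_ : j ∈ Finset.univ) =>
          sq_nonneg ((eval z (q i j)) * (w ⟨i, j⟩) ^ 2 - 1))).mp h1.2
      rw [Set.mem_iUnion]
      refine ⟨i, ?_⟩
      rw [hq i]
      refine ⟨hp0, fun j => ?_⟩
      have hj := hsum j (Finset.mem_univ j)
      have hj1 : (eval z (q i j)) * (w ⟨i, j⟩) ^ 2 = 1 := by nlinarith [hj]
      by_contra hle
      push_neg at hle
      nlinarith [sq_nonneg (w ⟨i, j⟩), mul_nonpos_of_nonpos_of_nonneg hle (sq_nonneg (w ⟨i, j⟩))]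
  · intro z
    refine ⟨fun s => wit (eval z (q s.1 s.2)), fun w => ?_⟩
    apply Finset.prod_le_prod
    · intro i _; positivity
    · intro i _
      apply add_le_add le_rfl
      apply Finset.sum_le_sum
      intro j _
      exact wit_min _ _

lemma chi_min {m0 : ℝ} (hm0 : 0 < m0) :
    ∃ t0 : ℝ, ∀ b t : ℝ, m0 ≤ b →
      t0 ^ 2 * (t0 ^ 2 * m0 - 1) ≤ t ^ 2 * (t ^ 2 * b - 1) := by
  refine ⟨Real.sqrt (1 / (2 * m0)), fun b t hb => ?_⟩
  have ht0 : (Real.sqrt (1 / (2 * m0))) ^ 2 = 1 / (2 * m0) :=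
    Real.sq_sqrt (by positivity)
  rw [ht0]
  have h1 : (1 / (2 * m0)) * ((1 / (2 * m0)) * m0 - 1) = -(1 / (4 * m0)) := by
    field_simp
    ring
  rw [h1]
  have h2 : -(1 / (4 * m0)) ≤ t ^ 2 * (t ^ 2 * m0 - 1) := by
    rw [neg_le, le_div_iff₀ (by linarith : (0:ℝ) < 4 * m0)]
    nlinarith [sq_nonneg (2 * m0 * t ^ 2 - 1)]
  have h3 : t ^ 2 * (t ^ 2 * m0 - 1) ≤ t ^ 2 * (t ^ 2 * b - 1) := by
    nlinarith [sq_nonneg t, sq_nonneg (t ^ 2)]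
  linarith

lemma ereal_eq_top {a : EReal} (H : ∀ r : ℝ, (r : EReal) ≤ a) : a = ⊤ := by
  induction a using EReal.rec with
  | bot => simpa using H 0
  | coe r =>
    have := H (r + 1)
    rw [EReal.coe_le_coe_iff] at this
    linarith
  | top => rfl

lemma ereal_trichotomy (a : EReal) : a = ⊥ ∨ (∃ r : ℝ, a = (r : EReal)) ∨ a = ⊤ := by
  induction a using EReal.rec with
  | bot => exact Or.inl rfl
  | coe r => exact Or.inr (Or.inl ⟨r, rfl⟩)
  | top => exact Or.inr (Or.inr rfl)


variable {n : ℕ} {Wg Wt Wb : Type}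

/-- the lower-level objective -/
def Q0 (Cg : ((Fin n ⊕ Unit) → ℝ) → (Wg → ℝ) → ℝ)
    (Ct : (Fin n → ℝ) → (Wt → ℝ) → ℝ) (Cb : (Fin n → ℝ) → (Wb → ℝ) → ℝ)
    (x : Fin n → ℝ) (y : (Unit ⊕ Wg ⊕ Wt) ⊕ (Wb ⊕ Unit) → ℝ) : ℝ :=
  Cg (Sum.elim x fun _ => y (Sum.inl (Sum.inl ())))
      (fun w => y (Sum.inl (Sum.inr (Sum.inl w)))) *
    Ct x (fun w => y (Sum.inl (Sum.inr (Sum.inr w)))) +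
  (y (Sum.inr (Sum.inr ()))) ^ 2 *
    ((y (Sum.inr (Sum.inr ()))) ^ 2 * Cb x (fun w => y (Sum.inr (Sum.inl w))) - 1)

lemma pm_Q0 {Cg : ((Fin n ⊕ Unit) → ℝ) → (Wg → ℝ) → ℝ}
    {Ct : (Fin n → ℝ) → (Wt → ℝ) → ℝ} {Cb : (Fin n → ℝ) → (Wb → ℝ) → ℝ}
    (hg : Pm Cg) (ht : Pm Ct) (hb : Pm Cb) : Pm (Q0 Cg Ct Cb) := by
  have h1 : Pm (fun (x : Fin n → ℝ) (y : (Unit ⊕ Wg ⊕ Wt) ⊕ (Wb ⊕ Unit) → ℝ) =>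
      Cg (Sum.elim x fun _ => y (Sum.inl (Sum.inl ())))
        (fun w => y (Sum.inl (Sum.inr (Sum.inl w))))) := by
    have := hg.comp_gen (κ' := (Unit ⊕ Wg ⊕ Wt) ⊕ (Wb ⊕ Unit))
      (Sum.elim Sum.inl (fun _ : Unit => Sum.inr (Sum.inl (Sum.inl ()))))
      (fun w => Sum.inr (Sum.inl (Sum.inr (Sum.inl w))))
    have e : ∀ (x : Fin n → ℝ) (y : (Unit ⊕ Wg ⊕ Wt) ⊕ (Wb ⊕ Unit) → ℝ),
        (Sum.elim x y ∘
          Sum.elim Sum.inl (fun _ : Unit => Sum.inr (Sum.inl (Sum.inl ())))) =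
        Sum.elim x (fun _ => y (Sum.inl (Sum.inl ()))) := by
      intro x y; funext z; cases z <;> rfl
    simp only [e] at this
    exact this
  have h2 : Pm (fun (x : Fin n → ℝ) (y : (Unit ⊕ Wg ⊕ Wt) ⊕ (Wb ⊕ Unit) → ℝ) =>
      Ct x (fun w => y (Sum.inl (Sum.inr (Sum.inr w))))) := by
    exact ht.comp_gen (κ' := (Unit ⊕ Wg ⊕ Wt) ⊕ (Wb ⊕ Unit)) Sum.inl (fun w => Sum.inr (Sum.inl (Sum.inr (Sum.inr w))))
  have h3 : Pm (fun (x : Fin n → ℝ) (y : (Unit ⊕ Wg ⊕ Wt) ⊕ (Wb ⊕ Unit) → ℝ) =>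
      Cb x (fun w => y (Sum.inr (Sum.inl w)))) := by
    exact hb.comp_gen (κ' := (Unit ⊕ Wg ⊕ Wt) ⊕ (Wb ⊕ Unit)) Sum.inl (fun w => Sum.inr (Sum.inr (Sum.inl w)))
  have h4 : Pm (fun (_ : Fin n → ℝ) (y : (Unit ⊕ Wg ⊕ Wt) ⊕ (Wb ⊕ Unit) → ℝ) =>
      y (Sum.inr (Sum.inr ()))) := Pm.coord _
  exact (h1.mul h2).add (((h4.pow 2)).mul (((h4.pow 2).mul h3).sub (Pm.const 1)))

/-- existence of a global minimizer of `Q0` whose upper part is a prescribed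
zero of the first product, together with the lower bound on the χ-part. -/
lemma exists_min_gen {Cg : ((Fin n ⊕ Unit) → ℝ) → (Wg → ℝ) → ℝ}
    {Ct : (Fin n → ℝ) → (Wt → ℝ) → ℝ} {Cb : (Fin n → ℝ) → (Wb → ℝ) → ℝ}
    {x : Fin n → ℝ}
    (nnCg : ∀ z w, 0 ≤ Cg z w) (nnCt : ∀ w, 0 ≤ Ct x w)
    {v0 : Wb → ℝ} (hv0 : ∀ v, Cb x v0 ≤ Cb x v) (hm0 : 0 < Cb x v0)
    (z₁ : Unit ⊕ Wg ⊕ Wt → ℝ)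
    (h1 : Cg (Sum.elim x fun _ => z₁ (Sum.inl ()))
        (fun w => z₁ (Sum.inr (Sum.inl w))) *
      Ct x (fun w => z₁ (Sum.inr (Sum.inr w))) = 0) :
    ∃ z₀ : (Unit ⊕ Wg ⊕ Wt) ⊕ (Wb ⊕ Unit) → ℝ,
      (∀ z, Q0 Cg Ct Cb x z₀ ≤ Q0 Cg Ct Cb x z) ∧
      z₀ (Sum.inl (Sum.inl ())) = z₁ (Sum.inl ()) ∧
      (∀ z : (Unit ⊕ Wg ⊕ Wt) ⊕ (Wb ⊕ Unit) → ℝ,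
        Q0 Cg Ct Cb x z₀ ≤ (z (Sum.inr (Sum.inr ()))) ^ 2 *
          ((z (Sum.inr (Sum.inr ()))) ^ 2 * Cb x (fun w => z (Sum.inr (Sum.inl w))) - 1)) := by
  obtain ⟨t0, ht0⟩ := chi_min hm0
  refine ⟨Sum.elim z₁ (Sum.elim v0 fun _ => t0), ?_, rfl, ?_⟩
  case _ =>
    intro z
    have e0 : Q0 Cg Ct Cb x (Sum.elim z₁ (Sum.elim v0 fun _ => t0)) =
        Cg (Sum.elim x fun _ => z₁ (Sum.inl ()))
            (fun w => z₁ (Sum.inr (Sum.inl w))) *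
          Ct x (fun w => z₁ (Sum.inr (Sum.inr w))) +
        t0 ^ 2 * (t0 ^ 2 * Cb x v0 - 1) := rfl
    rw [e0, h1, zero_add]
    have ez : Q0 Cg Ct Cb x z =
        Cg (Sum.elim x fun _ => z (Sum.inl (Sum.inl ())))
            (fun w => z (Sum.inl (Sum.inr (Sum.inl w)))) *
          Ct x (fun w => z (Sum.inl (Sum.inr (Sum.inr w)))) +
        (z (Sum.inr (Sum.inr ()))) ^ 2 *
          ((z (Sum.inr (Sum.inr ()))) ^ 2 * Cb x (fun w => z (Sum.inr (Sum.inl w))) - 1) := rfl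
    rw [ez]
    have hT1 : 0 ≤ Cg (Sum.elim x fun _ => z (Sum.inl (Sum.inl ())))
            (fun w => z (Sum.inl (Sum.inr (Sum.inl w)))) *
          Ct x (fun w => z (Sum.inl (Sum.inr (Sum.inr w)))) :=
      mul_nonneg (nnCg _ _) (nnCt _)
    have hT2 := ht0 (Cb x (fun w => z (Sum.inr (Sum.inl w)))) (z (Sum.inr (Sum.inr ()))) (hv0 _)
    linarith
  case _ =>
    intro z
    have e0 : Q0 Cg Ct Cb x (Sum.elim z₁ (Sum.elim v0 fun _ => t0)) =
        Cg (Sum.elim x fun _ => z₁ (Sum.inl ()))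
            (fun w => z₁ (Sum.inr (Sum.inl w))) *
          Ct x (fun w => z₁ (Sum.inr (Sum.inr w))) +
        t0 ^ 2 * (t0 ^ 2 * Cb x v0 - 1) := rfl
    rw [e0, h1, zero_add]
    exact ht0 _ _ (hv0 _)

end BilevelAux




theorem ereal_semialgebraic_is_pessimistic_value (n : ℕ) (h : (Fin n → ℝ) → EReal)
    (hh : IsERealSemialgebraicFun h) :
    ∃ (m : ℕ) (P Q : (Fin n → ℝ) → (Fin m → ℝ) → ℝ),
      IsPolyMap P ∧ IsPolyMap Q ∧
      ∀ x, valPess P Q Set.univ x = h x := by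
  classical
  obtain ⟨-, htop, hbot, hgraph⟩ := hh
  obtain ⟨Wt, iWt, Ct, pmCt, nnCt, memCt, -⟩ := BilevelAux.cert_exists htop
  obtain ⟨Wb, iWb, Cb, pmCb, nnCb, memCb, minCb⟩ := BilevelAux.cert_exists hbot
  obtain ⟨Wg, iWg, Cg, pmCg, nnCg, memCg, -⟩ := BilevelAux.cert_exists hgraph
  letI := iWt; letI := iWb; letI := iWg
  let κ := (Unit ⊕ Wg ⊕ Wt) ⊕ (Wb ⊕ Unit)
  let eqv : κ ≃ Fin (Fintype.card κ) := Fintype.equivFin κ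
  let Pf : (Fin n → ℝ) → (Fin (Fintype.card κ) → ℝ) → ℝ :=
    fun _ y => y (eqv (Sum.inl (Sum.inl ())))
  let Qf : (Fin n → ℝ) → (Fin (Fintype.card κ) → ℝ) → ℝ :=
    fun x y => BilevelAux.Q0 Cg Ct Cb x (y ∘ eqv)
  refine ⟨Fintype.card κ, Pf, Qf,
    ⟨MvPolynomial.X (Sum.inr (eqv (Sum.inl (Sum.inl ())))), by intro x y; simp [Pf]⟩, ?_, ?_⟩
  · obtain ⟨p, hp⟩ := (BilevelAux.pm_Q0 pmCg pmCt pmCb).comp_gen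
      (ι' := Fin n) Sum.inl (Sum.inr ∘ eqv)
    exact ⟨p, fun x y => hp x y⟩
  intro x
  have hθ : ∀ y : Fin (Fintype.card κ) → ℝ,
      (y ∈ argminSet Qf Set.univ x) ↔
        ∀ z : κ → ℝ, BilevelAux.Q0 Cg Ct Cb x (y ∘ eqv) ≤ BilevelAux.Q0 Cg Ct Cb x z := by
    intro y
    constructor
    · rintro ⟨-, H⟩ z
      have h1 := H (z ∘ eqv.symm) (Set.mem_univ _)
      have h2 : (z ∘ eqv.symm) ∘ eqv = z := by funext i; simp
      rw [show Qf x (z ∘ eqv.symm) =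
        BilevelAux.Q0 Cg Ct Cb x ((z ∘ eqv.symm) ∘ eqv) from rfl, h2] at h1
      exact h1
    · intro H
      exact ⟨Set.mem_univ _, fun y' _ => H (y' ∘ eqv)⟩
  have graphIff : ∀ r : ℝ, (h x = (r : EReal)) ↔ ∃ s, Cg (Sum.elim x fun _ => r) s = 0 := by
    intro r
    have := memCg (Sum.elim x fun _ => r)
    simpa using this
  have topIff : (h x = ⊤) ↔ ∃ u, Ct x u = 0 := by simpa using memCt x
  have botIff : (h x = ⊥) ↔ ∃ v, Cb x v = 0 := by simpa using memCb x
  rcases BilevelAux.ereal_trichotomy (h x) with hbx | ⟨rv, hrx⟩ | htx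
  · -- bottom case
    rw [hbx]
    have hempty : argminSet Qf Set.univ x = ∅ := by
      rw [Set.eq_empty_iff_forall_notMem]
      intro y hy
      obtain ⟨vstar, hvstar⟩ := botIff.mp hbx
      have H := (hθ y).mp hy
      set z := y ∘ eqv with hz
      set B := (z (Sum.inr (Sum.inr ()))) ^ 2 *
        ((z (Sum.inr (Sum.inr ()))) ^ 2 * Cb x (fun w => z (Sum.inr (Sum.inl w))) - 1) with hB
      set tb := Real.sqrt (|B| + 1) with htbdef
      have htb : tb ^ 2 = |B| + 1 := Real.sq_sqrt (by positivity)
      have h1 := H (Sum.elim (z ∘ Sum.inl) (Sum.elim vstar fun _ => tb))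
      have e1 : BilevelAux.Q0 Cg Ct Cb x (Sum.elim (z ∘ Sum.inl) (Sum.elim vstar fun _ => tb)) =
          Cg (Sum.elim x fun _ => z (Sum.inl (Sum.inl ())))
              (fun w => z (Sum.inl (Sum.inr (Sum.inl w)))) *
            Ct x (fun w => z (Sum.inl (Sum.inr (Sum.inr w)))) +
          tb ^ 2 * (tb ^ 2 * Cb x vstar - 1) := rfl
      have e2 : BilevelAux.Q0 Cg Ct Cb x z =
          Cg (Sum.elim x fun _ => z (Sum.inl (Sum.inl ())))
              (fun w => z (Sum.inl (Sum.inr (Sum.inl w)))) *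
            Ct x (fun w => z (Sum.inl (Sum.inr (Sum.inr w)))) + B := rfl
      rw [e1, e2, hvstar] at h1
      have e3 : tb ^ 2 * (tb ^ 2 * 0 - 1) = -(tb ^ 2) := by ring
      rw [e3, htb] at h1
      have hB1 : -|B| ≤ B := neg_abs_le B
      linarith
    unfold valPess
    rw [hempty]
    simp
  · -- finite case
    rw [hrx]
    have hxt : h x ≠ ⊤ := by rw [hrx]; exact EReal.coe_ne_top rv
    have hxb : h x ≠ ⊥ := by rw [hrx]; exact EReal.coe_ne_bot rv
    have hCtpos : ∀ u, 0 < Ct x u := by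
      intro u
      rcases (nnCt x u).lt_or_eq with hlt | heq
      · exact hlt
      · exact absurd (topIff.mpr ⟨u, heq.symm⟩) hxt
    obtain ⟨v0, hv0⟩ := minCb x
    have hm0 : 0 < Cb x v0 := by
      rcases (nnCb x v0).lt_or_eq with hlt | heq
      · exact hlt
      · exact absurd (botIff.mpr ⟨v0, heq.symm⟩) hxb
    obtain ⟨sg, hsg⟩ := (graphIff rv).mp hrx
    obtain ⟨z₀, hz₀min, hz₀r, hz₀chi⟩ :=
      BilevelAux.exists_min_gen nnCg (fun w => (hCtpos w).le) hv0 hm0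
        (Sum.elim (fun _ => rv) (Sum.elim sg fun _ => 0))
        (by
          have e : Cg (Sum.elim x fun _ =>
              ((Sum.elim (fun _ => rv) (Sum.elim sg fun _ => (0:ℝ))) : Unit ⊕ Wg ⊕ Wt → ℝ) (Sum.inl ()))
              (fun w => ((Sum.elim (fun _ => rv) (Sum.elim sg fun _ => (0:ℝ))) : Unit ⊕ Wg ⊕ Wt → ℝ)
                (Sum.inr (Sum.inl w))) = 0 := hsg
          rw [e, zero_mul])
    have hz₀rv : z₀ (Sum.inl (Sum.inl ())) = rv := hz₀r
    apply le_antisymm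
    · unfold valPess
      apply iSup₂_le
      intro y hy
      have H := (hθ y).mp hy
      have h1 := H z₀
      have h2 := hz₀chi (y ∘ eqv)
      have ez : BilevelAux.Q0 Cg Ct Cb x (y ∘ eqv) =
          Cg (Sum.elim x fun _ => (y ∘ eqv) (Sum.inl (Sum.inl ())))
              (fun w => (y ∘ eqv) (Sum.inl (Sum.inr (Sum.inl w)))) *
            Ct x (fun w => (y ∘ eqv) (Sum.inl (Sum.inr (Sum.inr w)))) +
          ((y ∘ eqv) (Sum.inr (Sum.inr ()))) ^ 2 *
            (((y ∘ eqv) (Sum.inr (Sum.inr ()))) ^ 2 *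
              Cb x (fun w => (y ∘ eqv) (Sum.inr (Sum.inl w))) - 1) := rfl
      rw [ez] at h1
      have hT1 : 0 ≤ Cg (Sum.elim x fun _ => (y ∘ eqv) (Sum.inl (Sum.inl ())))
              (fun w => (y ∘ eqv) (Sum.inl (Sum.inr (Sum.inl w)))) *
            Ct x (fun w => (y ∘ eqv) (Sum.inl (Sum.inr (Sum.inr w)))) :=
        mul_nonneg (nnCg _ _) (hCtpos _).le
      have hT10 : Cg (Sum.elim x fun _ => (y ∘ eqv) (Sum.inl (Sum.inl ())))
              (fun w => (y ∘ eqv) (Sum.inl (Sum.inr (Sum.inl w)))) *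
            Ct x (fun w => (y ∘ eqv) (Sum.inl (Sum.inr (Sum.inr w)))) = 0 := by
        linarith
      have hCg0 : Cg (Sum.elim x fun _ => (y ∘ eqv) (Sum.inl (Sum.inl ())))
          (fun w => (y ∘ eqv) (Sum.inl (Sum.inr (Sum.inl w)))) = 0 := by
        rcases mul_eq_zero.mp hT10 with h0 | h0
        · exact h0
        · exact absurd h0 (hCtpos _).ne'
      have hhx : h x = (((y ∘ eqv) (Sum.inl (Sum.inl ())) : ℝ) : EReal) :=
        (graphIff _).mpr ⟨_, hCg0⟩
      have hr : rv = (y ∘ eqv) (Sum.inl (Sum.inl ())) := by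
        rw [hrx] at hhx
        exact_mod_cast hhx
      have hPf : Pf x y = (y ∘ eqv) (Sum.inl (Sum.inl ())) := rfl
      rw [hPf, ← hr]
    · unfold valPess
      have hcomp : (z₀ ∘ eqv.symm) ∘ eqv = z₀ := by funext i; simp
      have hmem : (z₀ ∘ eqv.symm) ∈ argminSet Qf Set.univ x :=
        (hθ _).mpr (by rw [hcomp]; exact hz₀min)
      have hPv : Pf x (z₀ ∘ eqv.symm) = rv := by
        show z₀ (eqv.symm (eqv (Sum.inl (Sum.inl ())))) = rv
        rw [Equiv.symm_apply_apply, hz₀rv]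
      calc ((rv : ℝ) : EReal) = ((Pf x (z₀ ∘ eqv.symm) : ℝ) : EReal) := by rw [hPv]
        _ ≤ ⨆ y ∈ argminSet Qf Set.univ x, ((Pf x y : ℝ) : EReal) := le_iSup₂ (f := fun y (_ : y ∈ argminSet Qf Set.univ x) => ((Pf x y : ℝ) : EReal)) _ hmem
  · -- top case
    rw [htx]
    have hxb : h x ≠ ⊥ := by rw [htx]; exact fun c => by simp at c
    obtain ⟨v0, hv0⟩ := minCb x
    have hm0 : 0 < Cb x v0 := by
      rcases (nnCb x v0).lt_or_eq with hlt | heq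
      · exact hlt
      · exact absurd (botIff.mpr ⟨v0, heq.symm⟩) hxb
    obtain ⟨ustar, hustar⟩ := topIff.mp htx
    apply BilevelAux.ereal_eq_top
    intro R
    obtain ⟨z₀, hz₀min, hz₀r, -⟩ :=
      BilevelAux.exists_min_gen nnCg (nnCt x) hv0 hm0
        (Sum.elim (fun _ => R) (Sum.elim (fun _ => 0) ustar))
        (by
          have e : Ct x (fun w => ((Sum.elim (fun _ => R)
              (Sum.elim (fun _ => (0:ℝ)) ustar)) : Unit ⊕ Wg ⊕ Wt → ℝ) (Sum.inr (Sum.inr w))) = 0 := hustar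
          rw [e, mul_zero])
    have hz₀rv : z₀ (Sum.inl (Sum.inl ())) = R := hz₀r
    have hcomp : (z₀ ∘ eqv.symm) ∘ eqv = z₀ := by funext i; simp
    have hmem : (z₀ ∘ eqv.symm) ∈ argminSet Qf Set.univ x :=
      (hθ _).mpr (by rw [hcomp]; exact hz₀min)
    have hPv : Pf x (z₀ ∘ eqv.symm) = R := by
      show z₀ (eqv.symm (eqv (Sum.inl (Sum.inl ())))) = R
      rw [Equiv.symm_apply_apply, hz₀rv]
    show ((R : ℝ) : EReal) ≤ ⨆ y ∈ argminSet Qf Set.univ x, ((Pf x y : ℝ) : EReal)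
    calc ((R : ℝ) : EReal) = ((Pf x (z₀ ∘ eqv.symm) : ℝ) : EReal) := by rw [hPv]
      _ ≤ ⨆ y ∈ argminSet Qf Set.univ x, ((Pf x y : ℝ) : EReal) := le_iSup₂ (f := fun y (_ : y ∈ argminSet Qf Set.univ x) => ((Pf x y : ℝ) : EReal)) _ hmem
end
end

section
/- Let f : ℝⁿ → ℝ be a piecewise polynomial function. Then there exist m ∈ ℕ, polynomials P, Q : ℝⁿ × ℝᵐ → ℝ with Q(x,·) convex on ℝᵐ for every fixed x, and a box 𝒴 ⊆ ℝᵐ, such that the optimistic value function φ_o of the associated bilevel problem satisfies φ_o = f. -/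
open Set

noncomputable section

open Classical in
theorem exists_pattern {n : ℕ} (f : (Fin n → ℝ) → ℝ) (hf : IsPiecewisePolynomial f) :
    ∃ (s : ℕ) (g : Fin s → MvPolynomial (Fin n) ℝ)
      (F : (Fin s → Bool) → MvPolynomial (Fin n) ℝ),
      ∀ x, f x = MvPolynomial.eval x
        (F (fun k => decide (0 < MvPolynomial.eval x (g k)))) := by
  classical
  obtain ⟨N, S, p, hSA, _hdisj, hcover, hval⟩ := hf
  choose Nb T hTb hSeq using hSA
  choose Pb kq qb hTeq using fun i a => hTb i a
  set κ := (i : Fin N) × (a : Fin (Nb i)) × (Option (Fin (kq i a))) with hκ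
  let g0 : κ → MvPolynomial (Fin n) ℝ := fun z =>
    match z with
    | ⟨i, a, none⟩ => (Pb i a) ^ 2
    | ⟨i, a, some j⟩ => qb i a j
  -- condition on a Boolean pattern that encodes membership in T i a
  let cond : (i : Fin N) → Fin (Nb i) → (κ → Bool) → Prop := fun i a B =>
    (B ⟨i, a, none⟩ = false) ∧ ∀ j, B ⟨i, a, some j⟩ = true
  let F0 : (κ → Bool) → MvPolynomial (Fin n) ℝ := fun B =>
    if h : ∃ i, ∃ a, cond i a B then p h.choose else 0
  have hmemT : ∀ (x : Fin n → ℝ) (i : Fin N) (a : Fin (Nb i)),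
      x ∈ T i a ↔ cond i a (fun k => decide (0 < MvPolynomial.eval x (g0 k))) := by
    intro x i a
    rw [hTeq i a]
    constructor
    · rintro ⟨h1, h2⟩
      constructor
      · simp [g0, map_pow, h1]
      · intro j; simpa [g0] using h2 j
    · rintro ⟨h1, h2⟩
      constructor
      · have : ¬ (0 < MvPolynomial.eval x ((Pb i a) ^ 2)) := by
          simpa [g0] using h1
        have h2' : (MvPolynomial.eval x (Pb i a)) ^ 2 = 0 := by
          rw [map_pow] at this
          nlinarith [sq_nonneg (MvPolynomial.eval x (Pb i a)), this]
        exact pow_eq_zero_iff (n := 2) (by norm_num) |>.mp h2'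
      · intro j; simpa [g0] using h2 j
  have key : ∀ x, f x = MvPolynomial.eval x
      (F0 (fun k => decide (0 < MvPolynomial.eval x (g0 k)))) := by
    intro x
    set B := fun k => decide (0 < MvPolynomial.eval x (g0 k)) with hB
    have hx : x ∈ ⋃ i, S i := by rw [hcover]; trivial
    obtain ⟨i, hi⟩ := mem_iUnion.mp hx
    rw [hSeq i] at hi
    obtain ⟨a, ha⟩ := mem_iUnion.mp hi
    have hex : ∃ i, ∃ a, cond i a B := ⟨i, a, (hmemT x i a).mp ha⟩
    have hF0 : F0 B = p hex.choose := dif_pos hex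
    obtain ⟨a', ha'⟩ := hex.choose_spec
    have hx' : x ∈ S hex.choose := by
      rw [hSeq]
      exact mem_iUnion.mpr ⟨a', (hmemT x hex.choose a').mpr ha'⟩
    rw [hF0]
    exact hval _ x hx'
  -- flatten κ to Fin (card κ)
  let e := Fintype.equivFin κ
  refine ⟨Fintype.card κ, g0 ∘ e.symm, fun B => F0 (fun k => B (e k)), ?_⟩
  intro x
  have := key x
  convert this using 3
  simp only [Function.comp_apply, Equiv.symm_apply_apply]

-- convexity of a sum of convex functions
theorem convexOn_finset_sum {E : Type*} [AddCommGroup E] [Module ℝ E]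
    {ι : Type*} (t : Finset ι) {f : ι → E → ℝ}
    (h : ∀ i ∈ t, ConvexOn ℝ Set.univ (f i)) :
    ConvexOn ℝ Set.univ (fun y => ∑ i ∈ t, f i y) := by
  classical
  induction t using Finset.induction_on with
  | empty => simpa using convexOn_const (0:ℝ) convex_univ
  | insert a t' hni ih =>
    simp only [Finset.sum_insert hni]
    exact (h a (Finset.mem_insert_self a t')).add
      (ih fun i hi => h i (Finset.mem_insert_of_mem hi))

theorem main_construction {n : ℕ} (f : (Fin n → ℝ) → ℝ) (s : ℕ)
    (g : Fin s → MvPolynomial (Fin n) ℝ)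
    (F : (Fin s → Bool) → MvPolynomial (Fin n) ℝ)
    (hF : ∀ x, f x = MvPolynomial.eval x
        (F (fun k => decide (0 < MvPolynomial.eval x (g k))))) :
    ∃ (m : ℕ) (P Q : (Fin n → ℝ) → (Fin m → ℝ) → ℝ) (Y : Set (Fin m → ℝ)),
      IsPolyMap P ∧ IsPolyMap Q ∧ (∀ x, ConvexOn ℝ Set.univ (Q x)) ∧ IsBox Y ∧
      ∀ x, valOpt P Q Y x = ((f x : ℝ) : EReal) := by
  classical
  set a : (Fin n → ℝ) → Fin s → ℝ := fun x k => MvPolynomial.eval x (g k) with ha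
  set Q : (Fin n → ℝ) → (Fin s → ℝ) → ℝ :=
    fun x y => ∑ k, (a x k * y k - 1) ^ 2 with hQ
  set P : (Fin n → ℝ) → (Fin s → ℝ) → ℝ :=
    fun x y => ∑ b : Fin s → Bool, MvPolynomial.eval x (F b) *
      ∏ k, (if b k then a x k * y k else 1 - a x k * y k) with hP
  set Y : Set (Fin s → ℝ) := {y | ∀ i, 0 ≤ y i} with hY
  refine ⟨s, P, Q, Y, ?_, ?_, ?_, ?_, ?_⟩
  · -- IsPolyMap P
    refine ⟨∑ b : Fin s → Bool, (MvPolynomial.rename Sum.inl (F b)) *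
      ∏ k, (if b k then (MvPolynomial.rename Sum.inl (g k)) * MvPolynomial.X (Sum.inr k)
        else 1 - (MvPolynomial.rename Sum.inl (g k)) * MvPolynomial.X (Sum.inr k)), ?_⟩
    intro x y
    simp [hP, map_sum, map_prod, apply_ite (MvPolynomial.eval (Sum.elim x y)),
      MvPolynomial.eval_rename, Sum.elim_comp_inl, ha]
  · -- IsPolyMap Q
    refine ⟨∑ k, ((MvPolynomial.rename Sum.inl (g k)) * MvPolynomial.X (Sum.inr k) - 1) ^ 2, ?_⟩
    intro x y
    simp [hQ, map_sum, MvPolynomial.eval_rename, Sum.elim_comp_inl, ha]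
  · -- convexity
    intro x
    apply convexOn_finset_sum
    intro k _
    have h2 : ConvexOn ℝ Set.univ (fun t : ℝ => t ^ 2) := (even_two).convexOn_pow
    let A : (Fin s → ℝ) →ᵃ[ℝ] ℝ :=
      { toFun := fun y => a x k * y k - 1
        linear := a x k • LinearMap.proj k
        map_vadd' := by intro p v; simp; ring }
    have := h2.comp_affineMap A
    exact this
  · exact ⟨fun _ => (0 : EReal), fun _ => ⊤, by
      ext y
      simp [hY, EReal.coe_nonneg, le_top]⟩
  · intro x
    -- the optimal point
    set ystar : Fin s → ℝ := fun k => if 0 < a x k then (a x k)⁻¹ else 0 with hystar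
    have hterm_min : ∀ (y : Fin s → ℝ), (∀ i, 0 ≤ y i) → ∀ k,
        (a x k * ystar k - 1) ^ 2 ≤ (a x k * y k - 1) ^ 2 := by
      intro y hy k
      by_cases hk : 0 < a x k
      · simp only [hystar, if_pos hk, mul_inv_cancel₀ (ne_of_gt hk)]
        simpa using sq_nonneg (a x k * y k - 1)
      · have hk' : a x k ≤ 0 := le_of_not_gt hk
        have h0 : a x k * y k ≤ 0 := mul_nonpos_iff.mpr (Or.inr ⟨hk', hy k⟩)
        simp only [hystar, if_neg hk, mul_zero]
        nlinarith [sq_nonneg (a x k * y k)]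
    have hystar_mem : ystar ∈ argminSet Q Y x := by
      constructor
      · intro i
        simp only [hystar]
        split
        · next h => exact le_of_lt (inv_pos.mpr h)
        · exact le_refl 0
      · intro y hy
        exact Finset.sum_le_sum fun k _ => hterm_min y hy k
    -- the value of a x k * y k on the argmin set
    have hconst : ∀ y ∈ argminSet Q Y x, ∀ k,
        a x k * y k = (if 0 < a x k then (1:ℝ) else 0) := by
      rintro y ⟨hyY, hymin⟩ k
      have h1 : Q x y ≤ Q x ystar := hymin ystar hystar_mem.1
      have h2 : Q x ystar ≤ Q x y :=
        Finset.sum_le_sum fun k _ => hterm_min y hyY k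
      have heq : Q x ystar = Q x y := le_antisymm h2 h1
      have hterms : ∀ k ∈ Finset.univ,
          (a x k * ystar k - 1) ^ 2 = (a x k * y k - 1) ^ 2 :=
        (Finset.sum_eq_sum_iff_of_le (fun k _ => hterm_min y hyY k)).mp heq
      have hk := hterms k (Finset.mem_univ k)
      by_cases hpos : 0 < a x k
      · simp only [hystar, if_pos hpos, mul_inv_cancel₀ (ne_of_gt hpos)] at hk
        rw [if_pos hpos]
        nlinarith [hk]
      · have hk' : a x k ≤ 0 := le_of_not_gt hpos
        have h0 : a x k * y k ≤ 0 := mul_nonpos_iff.mpr (Or.inr ⟨hk', hyY k⟩)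
        simp only [hystar, if_neg hpos, mul_zero] at hk
        rw [if_neg hpos]
        nlinarith [hk]
    -- P is constant = f x on the argmin set
    have hPval : ∀ y ∈ argminSet Q Y x, P x y = f x := by
      intro y hy
      have hprod : ∀ b : Fin s → Bool,
          (∏ k, (if b k then a x k * y k else 1 - a x k * y k)) =
            (if b = (fun k => decide (0 < a x k)) then (1:ℝ) else 0) := by
        intro b
        by_cases hb : b = (fun k => decide (0 < a x k))
        · rw [if_pos hb]
          apply Finset.prod_eq_one
          intro k _
          rw [hconst y hy k]
          subst hb
          by_cases hpos : 0 < a x k <;> simp [hpos]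
        · rw [if_neg hb]
          have : ∃ k, b k ≠ decide (0 < a x k) := by
            by_contra hcon
            push_neg at hcon
            exact hb (funext hcon)
          obtain ⟨k0, hk0⟩ := this
          apply Finset.prod_eq_zero (Finset.mem_univ k0)
          rw [hconst y hy k0]
          by_cases hpos : 0 < a x k0
          · have : b k0 = false := by
              cases hbk : b k0
              · rfl
              · exfalso; apply hk0; simp [hbk, hpos]
            simp [this, hpos]
          · have : b k0 = true := by
              cases hbk : b k0
              · exfalso; apply hk0; simp [hbk, hpos]
              · rfl
            simp [this, hpos]
      simp only [hP]
      rw [Finset.sum_congr rfl (fun b _ => by rw [hprod b])]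
      simp only [mul_ite, mul_one, mul_zero]
      rw [Finset.sum_ite_eq' Finset.univ (fun k => decide (0 < a x k))
        (fun b => MvPolynomial.eval x (F b))]
      simp only [Finset.mem_univ, if_pos]
      exact (hF x).symm
    -- conclude
    apply le_antisymm
    · have h1 := iInf₂_le (f := fun (y : Fin s → ℝ) (_ : y ∈ argminSet Q Y x) =>
        ((P x y : ℝ) : EReal)) ystar hystar_mem
      rwa [hPval ystar hystar_mem] at h1
    · exact le_iInf₂ fun y hy => by rw [hPval y hy]

/-- every piecewise polynomial function is the optimistic value function of a
polynomial bilevel problem with convex lower-level objective over a box. -/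
theorem piecewise_poly_is_convex_lower_optimistic_value (n : ℕ) (f : (Fin n → ℝ) → ℝ)
    (hf : IsPiecewisePolynomial f) :
    ∃ (m : ℕ) (P Q : (Fin n → ℝ) → (Fin m → ℝ) → ℝ) (Y : Set (Fin m → ℝ)),
      IsPolyMap P ∧ IsPolyMap Q ∧ (∀ x, ConvexOn ℝ Set.univ (Q x)) ∧ IsBox Y ∧
      ∀ x, valOpt P Q Y x = ((f x : ℝ) : EReal) := by
  obtain ⟨s, g, F, hF⟩ := exists_pattern f hf
  exact main_construction f s g F hF
end
end

section
/- Let f : ℝⁿ → ℝ be a piecewise polynomial function. Then there exist m ∈ ℕ, polynomials P, Q : ℝⁿ × ℝᵐ → ℝ with Q(x,·) convex on ℝᵐ for every fixed x, and a box 𝒴 ⊆ ℝᵐ, such that the pessimistic value function φ_p of the associated bilevel problem satisfies φ_p = f. -/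
open Set

noncomputable section

namespace PPAux

open MvPolynomial Finset

lemma convexOn_affine_sq {m : ℕ} (L : (Fin m → ℝ) →ₗ[ℝ] ℝ) (c : ℝ) :
    ConvexOn ℝ univ (fun y => (L y + c) ^ 2) := by
  have h := (Even.convexOn_pow (𝕜 := ℝ) (even_two)).comp_affineMap
    (AffineMap.mk (fun y => L y + c) L (by intro p v; simp [add_comm, add_assoc, add_left_comm]))
  simpa [Function.comp_def] using h

lemma convexOn_finset_sum {m : ℕ} {ι : Type*} (s : Finset ι) (f : ι → (Fin m → ℝ) → ℝ)
    (h : ∀ i ∈ s, ConvexOn ℝ univ (f i)) :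
    ConvexOn ℝ univ (fun x => ∑ i ∈ s, f i x) := by
  induction s using Finset.cons_induction with
  | empty => simpa using convexOn_const (0:ℝ) convex_univ
  | cons a s ha ih =>
      simp only [Finset.sum_cons]
      exact (h a (Finset.mem_cons_self a s)).add (ih fun i hi => h i (Finset.mem_cons_of_mem hi))

variable {n N : ℕ}

abbrev BIdx (Nb : Fin N → ℕ) : Type := (i : Fin N) × Fin (Nb i)
abbrev JIdx (Nb : Fin N → ℕ) (k : ∀ i : Fin N, Fin (Nb i) → ℕ) : Type :=
  (b : BIdx Nb) × Fin (k b.1 b.2)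

abbrev mm (Nb : Fin N → ℕ) (k : ∀ i : Fin N, Fin (Nb i) → ℕ) : ℕ :=
  Fintype.card (BIdx Nb ⊕ JIdx Nb k)

def EE (Nb : Fin N → ℕ) (k : ∀ i : Fin N, Fin (Nb i) → ℕ) :
    (BIdx Nb ⊕ JIdx Nb k) ≃ Fin (mm Nb k) := Fintype.equivFin _

def sv (Nb : Fin N → ℕ) (k : ∀ i : Fin N, Fin (Nb i) → ℕ)
    (y : Fin (mm Nb k) → ℝ) (b : BIdx Nb) : ℝ := y (EE Nb k (Sum.inl b))

def tv (Nb : Fin N → ℕ) (k : ∀ i : Fin N, Fin (Nb i) → ℕ)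
    (y : Fin (mm Nb k) → ℝ) (j : JIdx Nb k) : ℝ := y (EE Nb k (Sum.inr j))

def bnd (Nb : Fin N → ℕ) (k : ∀ i : Fin N, Fin (Nb i) → ℕ) (idx : Fin (mm Nb k)) : EReal :=
  match (EE Nb k).symm idx with
  | Sum.inl _ => 1
  | Sum.inr _ => ⊤

def Ybox (Nb : Fin N → ℕ) (k : ∀ i : Fin N, Fin (Nb i) → ℕ) : Set (Fin (mm Nb k) → ℝ) :=
  {y | ∀ i, (0 : EReal) ≤ (y i : EReal) ∧ (y i : EReal) ≤ bnd Nb k i}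

lemma isBox_Ybox (Nb : Fin N → ℕ) (k : ∀ i : Fin N, Fin (Nb i) → ℕ) :
    IsBox (Ybox Nb k) := ⟨fun _ => 0, bnd Nb k, rfl⟩

lemma mem_Ybox {Nb : Fin N → ℕ} {k : ∀ i : Fin N, Fin (Nb i) → ℕ} (y : Fin (mm Nb k) → ℝ) :
    y ∈ Ybox Nb k ↔
      (∀ b, 0 ≤ sv Nb k y b ∧ sv Nb k y b ≤ 1) ∧ (∀ j, 0 ≤ tv Nb k y j) := by
  constructor
  · intro h
    refine ⟨fun b => ?_, fun j => ?_⟩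
    · have h1 := h (EE Nb k (Sum.inl b))
      have hb : bnd Nb k (EE Nb k (Sum.inl b)) = 1 := by
        simp [bnd, Equiv.symm_apply_apply]
      rw [hb] at h1
      rw [show (1 : EReal) = ((1:ℝ) : EReal) by norm_cast] at h1
      exact ⟨by exact_mod_cast h1.1, by exact_mod_cast h1.2⟩
    · have h1 := h (EE Nb k (Sum.inr j))
      exact_mod_cast h1.1
  · intro h i
    rcases hsym : (EE Nb k).symm i with b | j
    · have hi : i = EE Nb k (Sum.inl b) := by
        rw [← hsym, Equiv.apply_symm_apply]
      have hb : bnd Nb k i = 1 := by simp [bnd, hsym]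
      rw [hb, hi]
      have := h.1 b
      rw [show (1 : EReal) = ((1:ℝ) : EReal) by norm_cast]
      exact ⟨by exact_mod_cast this.1, by exact_mod_cast this.2⟩
    · have hi : i = EE Nb k (Sum.inr j) := by
        rw [← hsym, Equiv.apply_symm_apply]
      have hb : bnd Nb k i = ⊤ := by simp [bnd, hsym]
      rw [hb, hi]
      exact ⟨by exact_mod_cast h.2 j, le_top⟩

variable (Nb : Fin N → ℕ) (k : ∀ i : Fin N, Fin (Nb i) → ℕ)
  (A : ∀ i : Fin N, Fin (Nb i) → MvPolynomial (Fin n) ℝ)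
  (C : ∀ (i : Fin N) (j : Fin (Nb i)), Fin (k i j) → MvPolynomial (Fin n) ℝ)
  (p : Fin N → MvPolynomial (Fin n) ℝ)

def Qfun (x : Fin n → ℝ) (y : Fin (mm Nb k) → ℝ) : ℝ :=
  (∑ b : BIdx Nb, (sv Nb k y b * eval x (A b.1 b.2)) ^ 2)
  + (∑ j : JIdx Nb k, (sv Nb k y j.1 - tv Nb k y j * eval x (C j.1.1 j.1.2 j.2)) ^ 2)
  + ((∑ b : BIdx Nb, sv Nb k y b) - 1) ^ 2

def Pfun (x : Fin n → ℝ) (y : Fin (mm Nb k) → ℝ) : ℝ :=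
  ∑ b : BIdx Nb, sv Nb k y b * eval x (p b.1)

lemma isPolyMap_Pfun : IsPolyMap (Pfun Nb k p) := by
  refine ⟨∑ b : BIdx Nb, X (Sum.inr (EE Nb k (Sum.inl b))) * rename Sum.inl (p b.1), ?_⟩
  intro x y
  simp [Pfun, sv, eval_rename, Sum.elim_comp_inl]

lemma isPolyMap_Qfun : IsPolyMap (Qfun Nb k A C) := by
  refine ⟨(∑ b : BIdx Nb,
      (X (Sum.inr (EE Nb k (Sum.inl b))) * rename Sum.inl (A b.1 b.2)) ^ 2)
    + (∑ j : JIdx Nb k,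
      (X (Sum.inr (EE Nb k (Sum.inl j.1)))
        - X (Sum.inr (EE Nb k (Sum.inr j))) * rename Sum.inl (C j.1.1 j.1.2 j.2)) ^ 2)
    + ((∑ b : BIdx Nb, X (Sum.inr (EE Nb k (Sum.inl b)))) - 1) ^ 2, ?_⟩
  intro x y
  simp [Qfun, sv, tv, eval_rename, Sum.elim_comp_inl]

lemma convexOn_Qfun (x : Fin n → ℝ) : ConvexOn ℝ univ (Qfun Nb k A C x) := by
  have h1 : ConvexOn ℝ univ
      (fun y => ∑ b : BIdx Nb, (sv Nb k y b * eval x (A b.1 b.2)) ^ 2) := by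
    apply convexOn_finset_sum
    intro b _
    have h := convexOn_affine_sq
      ((eval x (A b.1 b.2)) • LinearMap.proj (R := ℝ) (φ := fun _ : Fin (mm Nb k) => ℝ)
        (EE Nb k (Sum.inl b))) 0
    have heq : (fun y : Fin (mm Nb k) → ℝ => (sv Nb k y b * eval x (A b.1 b.2)) ^ 2)
        = fun y => (((eval x (A b.1 b.2)) • LinearMap.proj (R := ℝ)
            (φ := fun _ : Fin (mm Nb k) => ℝ) (EE Nb k (Sum.inl b))) y + 0) ^ 2 := by
      funext y
      simp [sv, mul_comm]
    rw [heq]; exact h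
  have h2 : ConvexOn ℝ univ
      (fun y => ∑ j : JIdx Nb k,
        (sv Nb k y j.1 - tv Nb k y j * eval x (C j.1.1 j.1.2 j.2)) ^ 2) := by
    apply convexOn_finset_sum
    intro j _
    have h := convexOn_affine_sq
      (LinearMap.proj (R := ℝ) (φ := fun _ : Fin (mm Nb k) => ℝ) (EE Nb k (Sum.inl j.1))
        - (eval x (C j.1.1 j.1.2 j.2)) • LinearMap.proj (R := ℝ)
            (φ := fun _ : Fin (mm Nb k) => ℝ) (EE Nb k (Sum.inr j))) 0
    have heq : (fun y : Fin (mm Nb k) → ℝ =>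
        (sv Nb k y j.1 - tv Nb k y j * eval x (C j.1.1 j.1.2 j.2)) ^ 2)
        = fun y => ((LinearMap.proj (R := ℝ) (φ := fun _ : Fin (mm Nb k) => ℝ)
            (EE Nb k (Sum.inl j.1))
          - (eval x (C j.1.1 j.1.2 j.2)) • LinearMap.proj (R := ℝ)
              (φ := fun _ : Fin (mm Nb k) => ℝ) (EE Nb k (Sum.inr j))) y + 0) ^ 2 := by
      funext y
      simp [sv, tv, mul_comm]
    rw [heq]; exact h
  have h3 : ConvexOn ℝ univ
      (fun y => ((∑ b : BIdx Nb, sv Nb k y b) - 1) ^ 2) := by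
    have h := convexOn_affine_sq
      (∑ b : BIdx Nb, LinearMap.proj (R := ℝ) (φ := fun _ : Fin (mm Nb k) => ℝ)
        (EE Nb k (Sum.inl b))) (-1)
    have heq : (fun y : Fin (mm Nb k) → ℝ => ((∑ b : BIdx Nb, sv Nb k y b) - 1) ^ 2)
        = fun y => ((∑ b : BIdx Nb, LinearMap.proj (R := ℝ)
            (φ := fun _ : Fin (mm Nb k) => ℝ) (EE Nb k (Sum.inl b))) y + (-1)) ^ 2 := by
      funext y
      simp [sv, sub_eq_add_neg, LinearMap.sum_apply]
    rw [heq]; exact h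
  exact (h1.add h2).add h3

lemma valPess_eq (f : (Fin n → ℝ) → ℝ) (S : Fin N → Set (Fin n → ℝ))
    (hT : ∀ i, S i = ⋃ j : Fin (Nb i),
      {x | eval x (A i j) = 0 ∧ ∀ l, 0 < eval x (C i j l)})
    (hcover : (⋃ i, S i) = Set.univ)
    (hval : ∀ i, ∀ x ∈ S i, f x = eval x (p i))
    (x : Fin n → ℝ) :
    valPess (Pfun Nb k p) (Qfun Nb k A C) (Ybox Nb k) x = ((f x : ℝ) : EReal) := by
  classical
  -- nonnegativity of Q
  have hQnn : ∀ y, 0 ≤ Qfun Nb k A C x y := by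
    intro y
    unfold Qfun
    positivity
  -- the witness
  have hx : x ∈ ⋃ i, S i := hcover ▸ Set.mem_univ x
  obtain ⟨i0, hi0⟩ := Set.mem_iUnion.1 hx
  rw [hT i0] at hi0
  obtain ⟨l0, hl0⟩ := Set.mem_iUnion.1 hi0
  set b0 : BIdx Nb := ⟨i0, l0⟩ with hb0
  set Good : BIdx Nb → Prop :=
    fun b => eval x (A b.1 b.2) = 0 ∧ ∀ l, 0 < eval x (C b.1 b.2 l) with hGoodDef
  have hGood0 : Good b0 := hl0
  set y0 : Fin (mm Nb k) → ℝ := fun idx =>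
    match (EE Nb k).symm idx with
    | Sum.inl b => if b = b0 then 1 else 0
    | Sum.inr j => if j.1 = b0 then (eval x (C j.1.1 j.1.2 j.2))⁻¹ else 0 with hy0def
  have hsv0 : ∀ b, sv Nb k y0 b = if b = b0 then 1 else 0 := by
    intro b
    simp [sv, hy0def, Equiv.symm_apply_apply]
  have htv0 : ∀ j, tv Nb k y0 j
      = if j.1 = b0 then (eval x (C j.1.1 j.1.2 j.2))⁻¹ else 0 := by
    intro j
    simp [tv, hy0def, Equiv.symm_apply_apply]
  have hCpos : ∀ j : JIdx Nb k, j.1 = b0 → 0 < eval x (C j.1.1 j.1.2 j.2) := by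
    intro j hj
    have : Good j.1 := hj ▸ hGood0
    exact this.2 j.2
  have hy0Y : y0 ∈ Ybox Nb k := by
    rw [mem_Ybox]
    refine ⟨fun b => ?_, fun j => ?_⟩
    · rw [hsv0]; split_ifs <;> norm_num
    · rw [htv0]; split_ifs with hj
      · exact le_of_lt (inv_pos.2 (hCpos j hj))
      · exact le_refl 0
  have hQ0 : Qfun Nb k A C x y0 = 0 := by
    unfold Qfun
    have t1 : (∑ b : BIdx Nb, (sv Nb k y0 b * eval x (A b.1 b.2)) ^ 2) = 0 := by
      apply Finset.sum_eq_zero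
      intro b _
      rw [hsv0]
      split_ifs with hb
      · have : Good b := hb ▸ hGood0
        rw [this.1]; ring
      · ring
    have t2 : (∑ j : JIdx Nb k,
        (sv Nb k y0 j.1 - tv Nb k y0 j * eval x (C j.1.1 j.1.2 j.2)) ^ 2) = 0 := by
      apply Finset.sum_eq_zero
      intro j _
      rw [hsv0, htv0]
      split_ifs with hj
      · rw [inv_mul_cancel₀ (ne_of_gt (hCpos j hj))]; ring
      · ring
    have t3 : (∑ b : BIdx Nb, sv Nb k y0 b) = 1 := by
      have : (∑ b : BIdx Nb, sv Nb k y0 b) = ∑ b : BIdx Nb, if b = b0 then (1:ℝ) else 0 := by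
        exact Finset.sum_congr rfl fun b _ => hsv0 b
      rw [this, Finset.sum_ite_eq' Finset.univ b0 (fun _ => (1:ℝ))]
      simp
    rw [t1, t2, t3]
    ring
  -- characterization of the argmin set
  have hTheta : ∀ y, y ∈ argminSet (Qfun Nb k A C) (Ybox Nb k) x ↔
      y ∈ Ybox Nb k ∧ Qfun Nb k A C x y = 0 := by
    intro y
    constructor
    · intro hy
      refine ⟨hy.1, le_antisymm ?_ (hQnn y)⟩
      calc Qfun Nb k A C x y ≤ Qfun Nb k A C x y0 := hy.2 y0 hy0Y
        _ = 0 := hQ0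
    · intro hy
      exact ⟨hy.1, fun y' hy' => hy.2 ▸ hQnn y'⟩
  have hy0Θ : y0 ∈ argminSet (Qfun Nb k A C) (Ybox Nb k) x :=
    (hTheta y0).2 ⟨hy0Y, hQ0⟩
  -- P is constant equal to f x on the argmin set
  have hPval : ∀ y ∈ argminSet (Qfun Nb k A C) (Ybox Nb k) x, Pfun Nb k p x y = f x := by
    intro y hy
    rw [hTheta] at hy
    obtain ⟨hyY, hyQ⟩ := hy
    obtain ⟨hs01, ht0⟩ := (mem_Ybox y).1 hyY
    -- each square term vanishes
    have nn1 : (0:ℝ) ≤ ∑ b : BIdx Nb, (sv Nb k y b * eval x (A b.1 b.2)) ^ 2 :=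
      Finset.sum_nonneg fun b _ => sq_nonneg _
    have nn2 : (0:ℝ) ≤ ∑ j : JIdx Nb k,
        (sv Nb k y j.1 - tv Nb k y j * eval x (C j.1.1 j.1.2 j.2)) ^ 2 :=
      Finset.sum_nonneg fun j _ => sq_nonneg _
    have nn3 : (0:ℝ) ≤ ((∑ b : BIdx Nb, sv Nb k y b) - 1) ^ 2 := sq_nonneg _
    unfold Qfun at hyQ
    have e1 : (∑ b : BIdx Nb, (sv Nb k y b * eval x (A b.1 b.2)) ^ 2) = 0 := by linarith
    have e2 : (∑ j : JIdx Nb k,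
        (sv Nb k y j.1 - tv Nb k y j * eval x (C j.1.1 j.1.2 j.2)) ^ 2) = 0 := by linarith
    have e3 : ((∑ b : BIdx Nb, sv Nb k y b) - 1) ^ 2 = 0 := by linarith
    have h1 : ∀ b : BIdx Nb, sv Nb k y b * eval x (A b.1 b.2) = 0 := by
      intro b
      have := (Finset.sum_eq_zero_iff_of_nonneg (fun b _ => sq_nonneg _)).1 e1 b
        (Finset.mem_univ b)
      exact pow_eq_zero_iff (two_ne_zero) |>.1 this
    have h2 : ∀ j : JIdx Nb k,
        sv Nb k y j.1 - tv Nb k y j * eval x (C j.1.1 j.1.2 j.2) = 0 := by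
      intro j
      have := (Finset.sum_eq_zero_iff_of_nonneg (fun j _ => sq_nonneg _)).1 e2 j
        (Finset.mem_univ j)
      exact pow_eq_zero_iff (two_ne_zero) |>.1 this
    have h3 : (∑ b : BIdx Nb, sv Nb k y b) = 1 := by
      have := pow_eq_zero_iff (two_ne_zero) |>.1 e3
      linarith
    -- key: supported coordinates certify membership in pieces
    have key : ∀ b : BIdx Nb, sv Nb k y b * eval x (p b.1) = sv Nb k y b * f x := by
      intro b
      by_cases hs : sv Nb k y b = 0
      · rw [hs]; ring
      · have hA : eval x (A b.1 b.2) = 0 := by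
          rcases mul_eq_zero.1 (h1 b) with h | h
          · exact absurd h hs
          · exact h
        have hC : ∀ l, 0 < eval x (C b.1 b.2 l) := by
          intro l
          by_contra hc
          push_neg at hc
          have h2' := h2 ⟨b, l⟩
          have htnn := ht0 ⟨b, l⟩
          have : sv Nb k y b = tv Nb k y ⟨b, l⟩ * eval x (C b.1 b.2 l) := by
            have := h2'
            simp only at this
            linarith [this]
          have hle : sv Nb k y b ≤ 0 := by
            rw [this]
            exact mul_nonpos_of_nonneg_of_nonpos htnn hc
          have := (hs01 b).1
          exact hs (le_antisymm hle this)
        have hxS : x ∈ S b.1 := by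
          rw [hT b.1]
          exact Set.mem_iUnion.2 ⟨b.2, ⟨hA, hC⟩⟩
        rw [← hval b.1 x hxS]
    unfold Pfun
    calc (∑ b : BIdx Nb, sv Nb k y b * eval x (p b.1))
        = ∑ b : BIdx Nb, sv Nb k y b * f x := Finset.sum_congr rfl fun b _ => key b
      _ = (∑ b : BIdx Nb, sv Nb k y b) * f x := by rw [Finset.sum_mul]
      _ = f x := by rw [h3, one_mul]
  -- conclude
  unfold valPess
  have hcongr : (⨆ y ∈ argminSet (Qfun Nb k A C) (Ybox Nb k) x,
      ((Pfun Nb k p x y : ℝ) : EReal))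
      = ⨆ y ∈ argminSet (Qfun Nb k A C) (Ybox Nb k) x, ((f x : ℝ) : EReal) := by
    apply biSup_congr
    intro y hy
    rw [hPval y hy]
  rw [hcongr]
  exact biSup_const ⟨y0, hy0Θ⟩

end PPAux


/-- every piecewise polynomial function is the pessimistic value function of a
polynomial bilevel problem with convex lower-level objective over a box. -/
theorem piecewise_poly_is_convex_lower_pessimistic_value (n : ℕ) (f : (Fin n → ℝ) → ℝ)
    (hf : IsPiecewisePolynomial f) :
    ∃ (m : ℕ) (P Q : (Fin n → ℝ) → (Fin m → ℝ) → ℝ) (Y : Set (Fin m → ℝ)),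
      IsPolyMap P ∧ IsPolyMap Q ∧ (∀ x, ConvexOn ℝ Set.univ (Q x)) ∧ IsBox Y ∧
      ∀ x, valPess P Q Y x = ((f x : ℝ) : EReal) := by
  obtain ⟨N, S, p, hSA, hdisj, hcover, hval⟩ := hf
  choose Nb T hbasic hUnion using hSA
  choose A k C hC using hbasic
  have hT : ∀ i, S i = ⋃ j : Fin (Nb i),
      {x | MvPolynomial.eval x (A i j) = 0 ∧ ∀ l, 0 < MvPolynomial.eval x (C i j l)} :=
    fun i => (hUnion i).trans (Set.iUnion_congr fun j => hC i j)
  exact ⟨PPAux.mm Nb k, PPAux.Pfun Nb k p, PPAux.Qfun Nb k A C, PPAux.Ybox Nb k,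
    PPAux.isPolyMap_Pfun Nb k p, PPAux.isPolyMap_Qfun Nb k A C,
    PPAux.convexOn_Qfun Nb k A C, PPAux.isBox_Ybox Nb k,
    fun x => PPAux.valPess_eq Nb k A C p f S hT hcover hval x⟩
end
end

section
/- Let S = {x ∈ ℝⁿ : P(x) = 0 and Qⱼ(x) > 0 for all j ∈ J} be a basic semi-algebraic set, where P and the Qⱼ (j in a finite set J) are real polynomials. Then there exist m ∈ ℕ, polynomials F, G : ℝⁿ × ℝᵐ → ℝ with G(x,·) convex on ℝᵐ for every fixed x, and a box 𝒴 ⊆ ℝᵐ, such that both the optimistic and the pessimistic value functions of the bilevel problem with upper level F, lower level G, and lower-level feasible set 𝒴 are equal to the characteristic function 𝟏_S (the function equal to 1 on S and 0 elsewhere). -/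
open Set

noncomputable section

namespace BilevelAux

open MvPolynomial Finset

/-- Per-coordinate optimal point for the lower-level term `t ↦ (c t - 1)²` over `[0,∞)`. -/
noncomputable def vstar (c : ℝ) : ℝ := if 0 < c then 1 / c else 0

lemma vstar_nonneg (c : ℝ) : 0 ≤ vstar c := by
  unfold vstar; split
  · positivity
  · exact le_rfl

lemma term_min (c t : ℝ) (ht : 0 ≤ t) :
    (c * vstar c - 1) ^ 2 ≤ (c * t - 1) ^ 2 := by
  unfold vstar
  split
  · rename_i hc
    rw [mul_one_div, div_self hc.ne']
    simpa using sq_nonneg (c * t - 1)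
  · rename_i hc
    push_neg at hc
    have h1 : c * t ≤ 0 := mul_nonpos_of_nonpos_of_nonneg hc ht
    nlinarith [sq_nonneg (c * t)]

lemma term_eq (c t : ℝ) (ht : 0 ≤ t)
    (h : (c * t - 1) ^ 2 ≤ (c * vstar c - 1) ^ 2) :
    c * t = if 0 < c then 1 else 0 := by
  unfold vstar at h
  by_cases hc : 0 < c
  · simp only [hc, if_pos] at h ⊢
    rw [mul_one_div, div_self hc.ne'] at h
    have h0 : (c * t - 1) ^ 2 = 0 := le_antisymm (by simpa using h) (sq_nonneg _)
    have := sq_eq_zero_iff.mp h0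
    linarith
  · simp only [hc, if_neg, not_false_iff] at h ⊢
    push_neg at hc
    have h1 : c * t ≤ 0 := mul_nonpos_of_nonpos_of_nonneg hc ht
    have h2 : 0 ≤ c * t := by nlinarith [sq_nonneg (c * t)]
    linarith

lemma biInf_coe_const {α : Type*} (s : Set α) (f : α → ℝ) (c : ℝ)
    (hne : s.Nonempty) (hc : ∀ y ∈ s, f y = c) :
    (⨅ y ∈ s, ((f y : ℝ) : EReal)) = (c : EReal) := by
  obtain ⟨y0, hy0⟩ := hne
  refine le_antisymm ?_ ?_
  · exact (biInf_le _ hy0).trans_eq (by rw [hc y0 hy0])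
  · exact le_iInf₂ fun y hy => by rw [hc y hy]

lemma biSup_coe_const {α : Type*} (s : Set α) (f : α → ℝ) (c : ℝ)
    (hne : s.Nonempty) (hc : ∀ y ∈ s, f y = c) :
    (⨆ y ∈ s, ((f y : ℝ) : EReal)) = (c : EReal) := by
  obtain ⟨y0, hy0⟩ := hne
  refine le_antisymm ?_ ?_
  · exact iSup₂_le fun y hy => by rw [hc y hy]
  · exact ((le_biSup _ hy0).trans_eq' (by rw [hc y0 hy0]))

end BilevelAux

namespace BilevelAux

/-- Coefficients of the lower-level terms: `p²` for the 0-th coordinate, `q j` for the rest. -/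
noncomputable def aCoef {n k : ℕ} (p : MvPolynomial (Fin n) ℝ) (q : Fin k → MvPolynomial (Fin n) ℝ)
    (x : Fin n → ℝ) (i : Fin (k + 1)) : ℝ :=
  MvPolynomial.eval x (Fin.cases (p ^ 2) q i)

@[simp] lemma aCoef_zero {n k : ℕ} (p : MvPolynomial (Fin n) ℝ) (q : Fin k → MvPolynomial (Fin n) ℝ)
    (x : Fin n → ℝ) : aCoef p q x 0 = (MvPolynomial.eval x p) ^ 2 := by
  simp [aCoef]

@[simp] lemma aCoef_succ {n k : ℕ} (p : MvPolynomial (Fin n) ℝ) (q : Fin k → MvPolynomial (Fin n) ℝ)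
    (x : Fin n → ℝ) (j : Fin k) : aCoef p q x j.succ = MvPolynomial.eval x (q j) := by
  simp [aCoef]

/-- Upper-level objective. -/
noncomputable def FF {n k : ℕ} (p : MvPolynomial (Fin n) ℝ) (q : Fin k → MvPolynomial (Fin n) ℝ)
    (x : Fin n → ℝ) (v : Fin (k + 1) → ℝ) : ℝ :=
  (1 - aCoef p q x 0 * v 0) * ∏ j : Fin k, aCoef p q x j.succ * v j.succ

/-- Lower-level objective. -/
noncomputable def GG {n k : ℕ} (p : MvPolynomial (Fin n) ℝ) (q : Fin k → MvPolynomial (Fin n) ℝ)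
    (x : Fin n → ℝ) (v : Fin (k + 1) → ℝ) : ℝ :=
  ∑ i : Fin (k + 1), (aCoef p q x i * v i - 1) ^ 2

/-- The box `[0,∞)^{k+1}`. -/
def YY (k : ℕ) : Set (Fin (k + 1) → ℝ) := {v | ∀ i, 0 ≤ v i}

lemma mem_argmin_iff {n k : ℕ} (p : MvPolynomial (Fin n) ℝ) (q : Fin k → MvPolynomial (Fin n) ℝ)
    (x : Fin n → ℝ) (v : Fin (k + 1) → ℝ) :
    v ∈ argminSet (GG p q) (YY k) x ↔
      ∀ i, 0 ≤ v i ∧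
        (aCoef p q x i * v i - 1) ^ 2 ≤ (aCoef p q x i * vstar (aCoef p q x i) - 1) ^ 2 := by
  constructor
  · rintro ⟨hvY, hmin⟩
    have hvs : (fun i => vstar (aCoef p q x i)) ∈ YY k := fun i => vstar_nonneg _
    have h1 : GG p q x v ≤ GG p q x (fun i => vstar (aCoef p q x i)) := hmin _ hvs
    have h2 : ∀ i ∈ Finset.univ,
        (aCoef p q x i * vstar (aCoef p q x i) - 1) ^ 2 ≤ (aCoef p q x i * v i - 1) ^ 2 :=
      fun i _ => term_min _ _ (hvY i)
    have h3 : ∑ i : Fin (k + 1), (aCoef p q x i * vstar (aCoef p q x i) - 1) ^ 2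
        = ∑ i : Fin (k + 1), (aCoef p q x i * v i - 1) ^ 2 :=
      le_antisymm (Finset.sum_le_sum h2) h1
    have h4 := (Finset.sum_eq_sum_iff_of_le h2).mp h3
    exact fun i => ⟨hvY i, ((h4 i (Finset.mem_univ i)).symm).le⟩
  · intro hv
    refine ⟨fun i => (hv i).1, fun v' hv' => Finset.sum_le_sum fun i _ => ?_⟩
    exact (hv i).2.trans (term_min _ _ (hv' i))

lemma argmin_nonempty {n k : ℕ} (p : MvPolynomial (Fin n) ℝ)
    (q : Fin k → MvPolynomial (Fin n) ℝ) (x : Fin n → ℝ) :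
    (argminSet (GG p q) (YY k) x).Nonempty :=
  ⟨fun i => vstar (aCoef p q x i),
    (mem_argmin_iff p q x _).mpr fun i => ⟨vstar_nonneg _, le_rfl⟩⟩

lemma FF_const_on_argmin {n k : ℕ} (p : MvPolynomial (Fin n) ℝ)
    (q : Fin k → MvPolynomial (Fin n) ℝ) (x : Fin n → ℝ) (v : Fin (k + 1) → ℝ)
    (hv : v ∈ argminSet (GG p q) (YY k) x) :
    FF p q x v = if (MvPolynomial.eval x p = 0 ∧ ∀ j, 0 < MvPolynomial.eval x (q j))
      then 1 else 0 := by
  rw [mem_argmin_iff] at hv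
  have hval : ∀ i, aCoef p q x i * v i = if 0 < aCoef p q x i then 1 else 0 :=
    fun i => term_eq _ _ (hv i).1 (hv i).2
  by_cases hS : MvPolynomial.eval x p = 0 ∧ ∀ j, 0 < MvPolynomial.eval x (q j)
  · rw [if_pos hS]
    have h1 : ∀ j : Fin k, aCoef p q x j.succ * v j.succ = 1 := fun j => by
      rw [hval j.succ, if_pos (by simpa using hS.2 j)]
    have h0 : aCoef p q x 0 * v 0 = 0 := by
      rw [hval 0, if_neg (by simp [hS.1])]
    rw [FF, h0, Finset.prod_congr rfl (fun j _ => h1 j), Finset.prod_const_one]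
    ring
  · rw [if_neg hS]
    by_cases h0' : MvPolynomial.eval x p = 0
    · have hj : ∃ j : Fin k, ¬ 0 < MvPolynomial.eval x (q j) := by
        by_contra hcon; push_neg at hcon
        exact hS ⟨h0', hcon⟩
      obtain ⟨j, hj⟩ := hj
      have hz : aCoef p q x j.succ * v j.succ = 0 := by
        rw [hval j.succ, if_neg (by simpa using hj)]
      rw [FF, Finset.prod_eq_zero (Finset.mem_univ j) hz, mul_zero]
    · have hpos : 0 < aCoef p q x 0 := by
        rw [aCoef_zero]
        exact lt_of_le_of_ne (sq_nonneg _) (Ne.symm (pow_ne_zero _ h0'))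
      rw [FF, hval 0, if_pos hpos]
      ring

lemma GG_convex {n k : ℕ} (p : MvPolynomial (Fin n) ℝ)
    (q : Fin k → MvPolynomial (Fin n) ℝ) (x : Fin n → ℝ) :
    ConvexOn ℝ Set.univ (GG p q x) := by
  refine ⟨convex_univ, fun u _ w _ θ σ hθ hσ hsum => ?_⟩
  simp only [GG, Pi.add_apply, Pi.smul_apply, smul_eq_mul]
  rw [Finset.mul_sum, Finset.mul_sum, ← Finset.sum_add_distrib]
  refine Finset.sum_le_sum fun i _ => ?_
  have hσ' : σ = 1 - θ := by linarith
  subst hσ'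
  nlinarith [mul_nonneg (mul_nonneg hθ hσ) (sq_nonneg (aCoef p q x i * u i - aCoef p q x i * w i))]

end BilevelAux

/-- the characteristic function of a basic semi-algebraic set is both the
optimistic and the pessimistic value function of one polynomial bilevel problem with convex
lower-level objective over a box. -/
theorem basic_sa_characteristic_is_value (n : ℕ)
    (p : MvPolynomial (Fin n) ℝ) (k : ℕ) (q : Fin k → MvPolynomial (Fin n) ℝ) :
    ∃ (m : ℕ) (F G : (Fin n → ℝ) → (Fin m → ℝ) → ℝ) (Y : Set (Fin m → ℝ)),
      IsPolyMap F ∧ IsPolyMap G ∧ (∀ x, ConvexOn ℝ Set.univ (G x)) ∧ IsBox Y ∧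
      (∀ x, valOpt F G Y x =
        Set.indicator {x | MvPolynomial.eval x p = 0 ∧ ∀ j, 0 < MvPolynomial.eval x (q j)}
          (fun _ => (1 : EReal)) x) ∧
      (∀ x, valPess F G Y x =
        Set.indicator {x | MvPolynomial.eval x p = 0 ∧ ∀ j, 0 < MvPolynomial.eval x (q j)}
          (fun _ => (1 : EReal)) x) := by
  classical
  refine ⟨k + 1, BilevelAux.FF p q, BilevelAux.GG p q, BilevelAux.YY k, ?_, ?_, ?_, ?_, ?_, ?_⟩
  · refine ⟨(1 - MvPolynomial.rename Sum.inl (Fin.cases (p ^ 2) q (0 : Fin (k + 1))) *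
        MvPolynomial.X (Sum.inr 0)) *
      ∏ j : Fin k, MvPolynomial.rename Sum.inl (Fin.cases (p ^ 2) q j.succ) *
        MvPolynomial.X (Sum.inr j.succ), ?_⟩
    intro x y
    simp [BilevelAux.FF, BilevelAux.aCoef, MvPolynomial.eval_rename, map_prod,
      Sum.elim_comp_inl]
  · refine ⟨∑ i : Fin (k + 1), (MvPolynomial.rename Sum.inl (Fin.cases (p ^ 2) q i) *
        MvPolynomial.X (Sum.inr i) - 1) ^ 2, ?_⟩
    intro x y
    simp [BilevelAux.GG, BilevelAux.aCoef, MvPolynomial.eval_rename, map_sum,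
      Sum.elim_comp_inl]
  · exact fun x => BilevelAux.GG_convex p q x
  · refine ⟨fun _ => (0 : EReal), fun _ => ⊤, ?_⟩
    ext v
    simp only [BilevelAux.YY, Set.mem_setOf_eq, le_top, and_true]
    constructor
    · intro h i; exact_mod_cast h i
    · intro h i; exact_mod_cast h i
  · intro x
    have hval := BilevelAux.biInf_coe_const
      (argminSet (BilevelAux.GG p q) (BilevelAux.YY k) x) (BilevelAux.FF p q x)
      (if (MvPolynomial.eval x p = 0 ∧ ∀ j, 0 < MvPolynomial.eval x (q j)) then (1 : ℝ) else 0)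
      (BilevelAux.argmin_nonempty p q x)
      (fun v hv => BilevelAux.FF_const_on_argmin p q x v hv)
    rw [valOpt, hval]
    by_cases h : MvPolynomial.eval x p = 0 ∧ ∀ j, 0 < MvPolynomial.eval x (q j)
    · simp [Set.indicator_apply, Set.mem_setOf_eq, h]
    · simp [Set.indicator_apply, Set.mem_setOf_eq, h]
  · intro x
    have hval := BilevelAux.biSup_coe_const
      (argminSet (BilevelAux.GG p q) (BilevelAux.YY k) x) (BilevelAux.FF p q x)
      (if (MvPolynomial.eval x p = 0 ∧ ∀ j, 0 < MvPolynomial.eval x (q j)) then (1 : ℝ) else 0)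
      (BilevelAux.argmin_nonempty p q x)
      (fun v hv => BilevelAux.FF_const_on_argmin p q x v hv)
    rw [valPess, hval]
    by_cases h : MvPolynomial.eval x p = 0 ∧ ∀ j, 0 < MvPolynomial.eval x (q j)
    · simp [Set.indicator_apply, Set.mem_setOf_eq, h]
    · simp [Set.indicator_apply, Set.mem_setOf_eq, h]
end
end
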